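/- For every integer s > 625, if a 3-uniform [1,s]-almost intersecting hypergraph F has exactly 6s+6 edges, then F is of the form M_f: there exist disjoint finite sets A and B with |A| = 4 and |B| ≥ s+1, and a function f from the 2-element subsets of A to the (s+1)-element subsets of B satisfying f(S) = f(A \ S) for every 2-element subset S of A, such that F = { S ∪ {x} : S ⊆ A, |S| = 2, x ∈ f(S) }. -/

import Mathlib

set_option linter.unusedSectionVars false
set_option maxHeartbeats 1000000

open Finset

namespace Stmt15

variable {α : Type*} [DecidableEq α]

def tt (F : Finset (Finset α)) (q : Finset α) : ℕ := (F.filter fun E => q ⊆ E).card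
def dd (F : Finset (Finset α)) (E : Finset α) : ℕ := (F.filter fun B => Disjoint E B).card
def dg (F : Finset (Finset α)) (a : α) : ℕ := (F.filter fun E => a ∈ E).card

lemma bad3 (F : Finset (Finset α)) (hu : ∀ A ∈ F, A.card = 3)
    {q D : Finset α} (hq : q.card = 2) (hqD : Disjoint q D) (hD : D.card = 3) :
    ((F.filter fun E => q ⊆ E).filter fun E => ¬ Disjoint E D).card ≤ 3 := by
  have key : ∀ E ∈ (F.filter fun E => q ⊆ E).filter fun E => ¬ Disjoint E D,
      E ∩ D = E \ q ∧ (E ∩ D).card = 1 := by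
    intro E hE
    simp only [mem_filter] at hE
    obtain ⟨⟨hEF, hqE⟩, hnd⟩ := hE
    have hcard : (E \ q).card = 1 := by
      rw [card_sdiff_of_subset hqE, hu E hEF, hq]
    have hsub : E ∩ D ⊆ E \ q := by
      intro x hx
      simp only [mem_inter] at hx
      simp only [mem_sdiff]
      exact ⟨hx.1, fun hxq => (Finset.disjoint_left.1 hqD) hxq hx.2⟩
    have hne : (E ∩ D).Nonempty := not_disjoint_iff_nonempty_inter.1 hnd
    have : (E \ q).card ≤ (E ∩ D).card := by
      rw [hcard]; exact card_pos.2 hne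
    have heq := Finset.eq_of_subset_of_card_le hsub this
    exact ⟨heq, by rw [heq, hcard]⟩
  have h := Finset.card_le_card_of_injOn (f := fun E => E ∩ D) ?_ ?_
    (s := (F.filter fun E => q ⊆ E).filter fun E => ¬ Disjoint E D)
    (t := D.powersetCard 1)
  · have h2 : (D.powersetCard 1).card = 3 := by
      rw [Finset.card_powersetCard, hD]
      decide
    exact h.trans h2.le
  · intro E hE
    exact Finset.mem_powersetCard.2 ⟨inter_subset_right, (key E hE).2⟩
  · intro E hE E' hE' heq
    have h1 := (key E hE).1
    have h2 := (key E' hE').1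
    have hs1 : q ⊆ E := (Finset.mem_filter.1 (Finset.mem_filter.1 hE).1).2
    have hs2 : q ⊆ E' := (Finset.mem_filter.1 (Finset.mem_filter.1 hE').1).2
    have : E \ q = E' \ q := by rw [← h1, ← h2]; exact heq
    calc E = q ∪ E \ q := (Finset.union_sdiff_of_subset hs1).symm
    _ = q ∪ E' \ q := by rw [this]
    _ = E' := Finset.union_sdiff_of_subset hs2

lemma filter_split_le (F : Finset (Finset α)) (p q : Finset α → Prop)
    [DecidablePred p] [DecidablePred q] :
    (F.filter p).card ≤ ((F.filter p).filter q).card + ((F.filter p).filter fun E => ¬ q E).card := by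
  rw [Finset.card_filter_add_card_filter_not (p := q)]

lemma disj_part_le (F : Finset (Finset α)) {q E₀ : Finset α} :
    ((F.filter fun E => q ⊆ E).filter fun E => Disjoint E E₀).card ≤ dd F E₀ := by
  apply Finset.card_le_card
  intro E hE
  simp only [mem_filter] at hE ⊢
  exact ⟨hE.1.1, hE.2.symm⟩

lemma t_le_d3 (F : Finset (Finset α)) (hu : ∀ A ∈ F, A.card = 3)
    {q E₀ : Finset α} (hq : q.card = 2) (hqE : Disjoint q E₀) (hE₀ : E₀ ∈ F) :
    tt F q ≤ dd F E₀ + 3 := by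
  have h1 := filter_split_le F (fun E => q ⊆ E) (fun E => Disjoint E E₀)
  have h2 := bad3 F hu hq hqE (hu E₀ hE₀)
  have h3 := disj_part_le F (q := q) (E₀ := E₀)
  unfold tt
  omega

lemma t_le (F : Finset (Finset α)) (hu : ∀ A ∈ F, A.card = 3)
    (h1 : ∀ A ∈ F, 1 ≤ dd F A) (h2 : ∀ A ∈ F, dd F A ≤ s)
    {q : Finset α} (hq : q.card = 2) : tt F q ≤ s + 3 := by
  rcases Finset.eq_empty_or_nonempty (F.filter fun E => q ⊆ E) with he | ⟨E, hE⟩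
  · unfold tt; rw [he]; simp
  · simp only [mem_filter] at hE
    obtain ⟨hEF, hqE⟩ := hE
    obtain ⟨D, hD⟩ := Finset.card_pos.1 (lt_of_lt_of_le Nat.zero_lt_one (h1 E hEF))
    simp only [mem_filter] at hD
    obtain ⟨hDF, hed⟩ := hD
    have hqD : Disjoint q D := Finset.disjoint_of_subset_left hqE hed
    exact le_trans (t_le_d3 F hu hq hqD hDF) (by have := h2 D hDF; omega)

lemma union_card_ge3 {q1 q2 : Finset α} (h1 : q1.card = 2) (h2 : q2.card = 2)
    (hne : q1 ≠ q2) : 3 ≤ (q1 ∪ q2).card := by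
  by_contra h
  push_neg at h
  have hsub : q1 ⊆ q1 ∪ q2 := Finset.subset_union_left
  have hcle : (q1 ∪ q2).card ≤ q1.card := by omega
  have heq : q1 = q1 ∪ q2 := Finset.eq_of_subset_of_card_le hsub hcle
  have hq2sub : q2 ⊆ q1 := by rw [heq]; exact Finset.subset_union_right
  exact hne (Finset.eq_of_subset_of_card_le hq2sub (by omega)).symm

lemma two_pairs (F : Finset (Finset α)) (hu : ∀ A ∈ F, A.card = 3)
    {q1 q2 E₀ : Finset α} (h1 : q1.card = 2) (h2 : q2.card = 2) (hne : q1 ≠ q2)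
    (hE₀ : E₀ ∈ F) (hd1 : Disjoint q1 E₀) (hd2 : Disjoint q2 E₀) :
    tt F q1 + tt F q2 ≤ dd F E₀ + 7 := by
  set X := (F.filter fun E => q1 ⊆ E).filter fun E => Disjoint E E₀ with hX
  set Y := (F.filter fun E => q2 ⊆ E).filter fun E => Disjoint E E₀ with hY
  have hXY : (X ∩ Y).card ≤ 1 := by
    apply Finset.card_le_one.2
    intro E hE E' hE'
    simp only [hX, hY, mem_inter, mem_filter] at hE hE'
    have hcu := union_card_ge3 h1 h2 hne
    have key : ∀ G : Finset α, G ∈ F → q1 ⊆ G → q2 ⊆ G → G = q1 ∪ q2 := by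
      intro G hG hg1 hg2
      have hsub : q1 ∪ q2 ⊆ G := Finset.union_subset hg1 hg2
      have : G.card ≤ (q1 ∪ q2).card := by rw [hu G hG]; omega
      exact (Finset.eq_of_subset_of_card_le hsub this).symm
    rw [key E hE.1.1.1 hE.1.1.2 hE.2.1.2, key E' hE'.1.1.1 hE'.1.1.2 hE'.2.1.2]
  have hunion : (X ∪ Y).card ≤ dd F E₀ := by
    apply Finset.card_le_card
    intro E hE
    rcases Finset.mem_union.1 hE with h | h <;>
      · simp only [hX, hY, mem_filter] at h
        simp only [mem_filter]
        exact ⟨h.1.1, h.2.symm⟩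
  have hie := Finset.card_union_add_card_inter X Y
  have ht1 : tt F q1 ≤ X.card + 3 := by
    have ha := filter_split_le F (fun E => q1 ⊆ E) (fun E => Disjoint E E₀)
    have hb := bad3 F hu h1 hd1 (hu E₀ hE₀)
    unfold tt; rw [hX]; omega
  have ht2 : tt F q2 ≤ Y.card + 3 := by
    have ha := filter_split_le F (fun E => q2 ⊆ E) (fun E => Disjoint E E₀)
    have hb := bad3 F hu h2 hd2 (hu E₀ hE₀)
    unfold tt; rw [hY]; omega
  omega

lemma dagger (F : Finset (Finset α)) (hu : ∀ A ∈ F, A.card = 3)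
    (hds : ∀ A ∈ F, dd F A ≤ s)
    {q1 q2 E₀ : Finset α} (h1 : q1.card = 2) (h2 : q2.card = 2) (hne : q1 ≠ q2)
    (hsup1 : s + 11 ≤ 2 * tt F q1) (hsup2 : s + 11 ≤ 2 * tt F q2)
    (hE₀ : E₀ ∈ F) (hd1 : Disjoint q1 E₀) (hd2 : Disjoint q2 E₀) : False := by
  have := two_pairs F hu h1 h2 hne hE₀ hd1 hd2
  have := hds E₀ hE₀
  omega

lemma arith1 {Q t s k : ℕ} (h : Q * t ≤ s * t + 3 * Q) (hQ : s + k ≤ Q) (ht : 3 ≤ t) :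
    k * (t - 3) ≤ 3 * s := by
  obtain ⟨u, rfl⟩ : ∃ u, t = u + 3 := ⟨t - 3, by omega⟩
  have e1 : Q * (u + 3) = Q * u + 3 * Q := by ring
  have e2 : s * (u + 3) = s * u + 3 * s := by ring
  rw [e1, e2] at h
  have h2 : Q * u ≤ s * u + 3 * s := by omega
  have h3 : (s + k) * u ≤ Q * u := Nat.mul_le_mul_right u hQ
  have h4 : (s + k) * u = s * u + k * u := by ring
  have : k * u ≤ 3 * s := by omega
  simpa using this

lemma swap_count (X Y : Finset (Finset α)) :
    ∑ D ∈ X, (Y.filter fun E => Disjoint D E).card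
      = ∑ E ∈ Y, (X.filter fun D => Disjoint D E).card := by
  simp only [Finset.card_filter]
  exact Finset.sum_comm

lemma lem_cnt (F : Finset (Finset α)) (hu : ∀ A ∈ F, A.card = 3)
    (hds : ∀ A ∈ F, dd F A ≤ s)
    {q : Finset α} (hq : q.card = 2) {Y : Finset (Finset α)} (hYF : Y ⊆ F)
    (hYq : ∀ D ∈ Y, Disjoint q D) :
    Y.card * tt F q ≤ s * tt F q + 3 * Y.card := by
  have hper : ∀ D ∈ Y, tt F q ≤ ((F.filter fun E => q ⊆ E).filter fun E => Disjoint E D).card + 3 := by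
    intro D hD
    have h1 := filter_split_le F (fun E => q ⊆ E) (fun E => Disjoint E D)
    have h2 := bad3 F hu hq (hYq D hD) (hu D (hYF hD))
    unfold tt; omega
  have hsum1 : Y.card * tt F q ≤
      (∑ D ∈ Y, ((F.filter fun E => q ⊆ E).filter fun E => Disjoint E D).card) + 3 * Y.card := by
    have := Finset.sum_le_sum hper
    rw [Finset.sum_add_distrib, Finset.sum_const] at this
    simpa [Finset.sum_const, mul_comm] using this
  have hswap : ∑ D ∈ Y, ((F.filter fun E => q ⊆ E).filter fun E => Disjoint E D).card
      = ∑ E ∈ (F.filter fun E => q ⊆ E), (Y.filter fun D => Disjoint D E).card := by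
    have := swap_count (X := F.filter fun E => q ⊆ E) (Y := Y)
    rw [← this]
    apply Finset.sum_congr rfl
    intro E _
    apply Finset.card_bij (fun D _ => D) <;> simp +contextual [disjoint_comm]
  have hbound : ∀ E ∈ (F.filter fun E => q ⊆ E), (Y.filter fun D => Disjoint D E).card ≤ s := by
    intro E hE
    simp only [mem_filter] at hE
    refine le_trans ?_ (hds E hE.1)
    apply Finset.card_le_card
    intro D hD
    simp only [mem_filter] at hD ⊢
    exact ⟨hYF hD.1, hD.2.symm⟩
  have hsum2 : ∑ E ∈ (F.filter fun E => q ⊆ E), (Y.filter fun D => Disjoint D E).card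
      ≤ (tt F q) * s := by
    calc _ ≤ ∑ _E ∈ (F.filter fun E => q ⊆ E), s := Finset.sum_le_sum hbound
    _ = tt F q * s := by rw [Finset.sum_const]; simp [tt, mul_comm]
  calc Y.card * tt F q ≤ _ := hsum1
  _ ≤ tt F q * s + 3 * Y.card := by omega
  _ = s * tt F q + 3 * Y.card := by ring

lemma step6 (F : Finset (Finset α)) (hu : ∀ A ∈ F, A.card = 3)
    (hds : ∀ A ∈ F, dd F A ≤ s)
    {a : α} {D : Finset α} (hDF : D ∈ F) (haD : a ∉ D) :
    dg F a ≤ s + ∑ w ∈ D, tt F {a, w} := by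
  have hsplit := filter_split_le F (fun E => a ∈ E) (fun E => Disjoint E D)
  have h1 : ((F.filter fun E => a ∈ E).filter fun E => Disjoint E D).card ≤ s := by
    refine le_trans ?_ (hds D hDF)
    apply Finset.card_le_card
    intro E hE
    simp only [mem_filter] at hE ⊢
    exact ⟨hE.1.1, hE.2.symm⟩
  have hsub : ((F.filter fun E => a ∈ E).filter fun E => ¬ Disjoint E D)
      ⊆ D.biUnion (fun w => F.filter fun E => {a, w} ⊆ E) := by
    intro E hE
    simp only [mem_filter] at hE
    obtain ⟨⟨hEF, haE⟩, hnd⟩ := hE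
    obtain ⟨x, hx⟩ := not_disjoint_iff_nonempty_inter.1 hnd
    simp only [mem_inter] at hx
    apply Finset.mem_biUnion.2
    exact ⟨x, hx.2, by
      simp only [mem_filter]
      exact ⟨hEF, by
        intro y hy
        simp only [mem_insert, mem_singleton] at hy
        rcases hy with rfl | rfl
        · exact haE
        · exact hx.1⟩⟩
  have h2 : ((F.filter fun E => a ∈ E).filter fun E => ¬ Disjoint E D).card
      ≤ ∑ w ∈ D, (F.filter fun E => {a, w} ⊆ E).card :=
    le_trans (Finset.card_le_card hsub) Finset.card_biUnion_le
  simp only [tt]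
  unfold dg
  omega

lemma link_sum (F : Finset (Finset α)) (hu : ∀ A ∈ F, A.card = 3)
    {a : α} {Z : Finset α} (haZ : a ∉ Z) :
    ∑ w ∈ Z, tt F {a, w} ≤ 2 * dg F a := by
  have e1 : ∑ w ∈ Z, tt F {a, w} = ∑ E ∈ F, ∑ w ∈ Z, (if {a, w} ⊆ E then 1 else 0) := by
    simp only [tt, Finset.card_filter]
    exact Finset.sum_comm
  rw [e1]
  have e2 : ∀ E ∈ F, (∑ w ∈ Z, (if {a, w} ⊆ E then 1 else 0)) ≤ (if a ∈ E then 2 else 0) := by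
    intro E hE
    by_cases haE : a ∈ E
    · simp only [if_pos haE]
      have : (∑ w ∈ Z, (if {a, w} ⊆ E then 1 else 0)) = (Z.filter fun w => {a, w} ⊆ E).card := by
        rw [Finset.card_filter]
      rw [this]
      have hsub : (Z.filter fun w => {a, w} ⊆ E) ⊆ E \ {a} := by
        intro w hw
        simp only [mem_filter] at hw
        simp only [mem_sdiff, mem_singleton]
        constructor
        · exact hw.2 (by simp)
        · rintro rfl; exact haZ hw.1
      refine le_trans (Finset.card_le_card hsub) ?_
      rw [Finset.card_sdiff_of_subset (by simp [haE])]
      simp [hu E hE]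
    · simp only [if_neg haE]
      apply le_of_eq
      apply Finset.sum_eq_zero
      intro w _
      rw [if_neg]
      intro hsub
      exact haE (hsub (by simp))
  refine le_trans (Finset.sum_le_sum e2) ?_
  apply le_of_eq
  rw [dg, Finset.card_filter, Finset.mul_sum]
  apply Finset.sum_congr rfl
  intro E _
  by_cases haE : a ∈ E <;> simp [haE]

lemma pair_card {u v : α} (h : u ≠ v) : ({u, v} : Finset α).card = 2 :=
  Finset.card_pair h

lemma tt_pair_eq (F : Finset (Finset α)) (u v : α) :
    tt F {u, v} = (F.filter fun C => u ∈ C ∧ v ∈ C).card := by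
  unfold tt
  congr 1
  apply Finset.filter_congr
  intro C _
  simp [Finset.insert_subset_iff]

lemma disj_pair_iff {u v : α} {C : Finset α} :
    Disjoint ({u, v} : Finset α) C ↔ u ∉ C ∧ v ∉ C := by
  simp [Finset.disjoint_left]

lemma big_vertex (F : Finset (Finset α)) (hu : ∀ A ∈ F, A.card = 3)
    (hd1 : ∀ A ∈ F, 1 ≤ dd F A) (hds : ∀ A ∈ F, dd F A ≤ s)
    (hc : F.card = 6 * s + 6) (hs : 625 < s) :
    ∃ a : α, 49 * s ≤ 18 * dg F a + 3 := by
  -- find two disjoint edges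
  have hFne : F.Nonempty := Finset.card_pos.1 (by omega)
  obtain ⟨E1, hE1⟩ := hFne
  obtain ⟨E2, hE2⟩ := Finset.card_pos.1 (lt_of_lt_of_le Nat.zero_lt_one (hd1 E1 hE1))
  simp only [mem_filter] at hE2
  obtain ⟨hE2F, hdisj⟩ := hE2
  -- G : edges meeting both
  set G := F.filter (fun C => ¬ Disjoint E1 C ∧ ¬ Disjoint E2 C) with hG
  have hGcard : 4 * s + 6 ≤ G.card := by
    have hsubF : F ⊆ G ∪ (F.filter fun C => Disjoint E1 C) ∪ (F.filter fun C => Disjoint E2 C) := by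
      intro C hC
      simp only [hG, Finset.mem_union, mem_filter]
      by_cases h1 : Disjoint E1 C
      · tauto
      · by_cases h2 : Disjoint E2 C <;> tauto
    have := Finset.card_le_card hsubF
    have h2 := Finset.card_union_le (G ∪ (F.filter fun C => Disjoint E1 C)) (F.filter fun C => Disjoint E2 C)
    have h3 := Finset.card_union_le G (F.filter fun C => Disjoint E1 C)
    have h4 := hds E1 hE1
    have h5 := hds E2 hE2F
    unfold dd at h4 h5
    omega
  -- pigeonhole over the 9 cross pairs
  have hGsub : G ⊆ (E1 ×ˢ E2).biUnion (fun p => F.filter fun C => p.1 ∈ C ∧ p.2 ∈ C) := by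
    intro C hC
    simp only [hG, mem_filter] at hC
    obtain ⟨hCF, hn1, hn2⟩ := hC
    obtain ⟨x, hx⟩ := not_disjoint_iff_nonempty_inter.1 hn1
    obtain ⟨y, hy⟩ := not_disjoint_iff_nonempty_inter.1 hn2
    simp only [mem_inter] at hx hy
    apply Finset.mem_biUnion.2
    refine ⟨(x, y), Finset.mem_product.2 ⟨hx.1, hy.1⟩, ?_⟩
    simp only [mem_filter]
    exact ⟨hCF, hx.2, hy.2⟩
  obtain ⟨u, v, huE1, hvE2, hbig⟩ :
      ∃ u v, u ∈ E1 ∧ v ∈ E2 ∧ 4 * s + 6 ≤ 9 * (F.filter fun C => u ∈ C ∧ v ∈ C).card := by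
    by_contra hcon
    push_neg at hcon
    have hsum : ∀ p ∈ E1 ×ˢ E2, 9 * (F.filter fun C => p.1 ∈ C ∧ p.2 ∈ C).card ≤ 4 * s + 5 := by
      intro p hp
      have := hcon p.1 p.2 (Finset.mem_product.1 hp).1 (Finset.mem_product.1 hp).2
      omega
    have h9 : (E1 ×ˢ E2).card = 9 := by
      rw [Finset.card_product, hu E1 hE1, hu E2 hE2F]
    have hle := Finset.card_le_card hGsub
    have hble := Finset.card_biUnion_le (s := E1 ×ˢ E2)
      (t := fun p => F.filter fun C => p.1 ∈ C ∧ p.2 ∈ C)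
    have hss : ∑ p ∈ E1 ×ˢ E2, (F.filter fun C => p.1 ∈ C ∧ p.2 ∈ C).card ≤ 4 * s + 5 := by
      by_contra hss
      push_neg at hss
      have h1 : ∑ p ∈ E1 ×ˢ E2, 9 * (F.filter fun C => p.1 ∈ C ∧ p.2 ∈ C).card
          ≤ ∑ _p ∈ E1 ×ˢ E2, (4 * s + 5) := Finset.sum_le_sum hsum
      rw [← Finset.mul_sum, Finset.sum_const, h9, smul_eq_mul] at h1
      omega
    omega
  have huv : u ≠ v := by
    rintro rfl
    exact (Finset.disjoint_left.1 hdisj) huE1 hvE2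
  have hq2 : ({u, v} : Finset α).card = 2 := pair_card huv
  have hT : 4 * s + 6 ≤ 9 * tt F {u, v} := by rw [tt_pair_eq F u v]; exact hbig
  -- bound the set of edges avoiding {u,v}
  set Y := F.filter (fun D => Disjoint ({u, v} : Finset α) D) with hY
  have hYb : Y.card ≤ s + 7 := by
    by_contra hcon
    push_neg at hcon
    have hcnt := lem_cnt (s := s) F hu hds hq2 (Finset.filter_subset _ F)
      (fun D hD => (Finset.mem_filter.1 hD).2)
    rw [← hY] at hcnt
    have := arith1 hcnt (by omega : s + 8 ≤ Y.card) (by omega : 3 ≤ tt F {u, v})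
    omega
  -- edges meeting {u,v}
  have hsplitm := filter_split_le F (fun C => True) (fun C => Disjoint ({u, v} : Finset α) C)
  have hmeet : 6 * s + 6 ≤ (F.filter fun C => ¬ Disjoint ({u, v} : Finset α) C).card + Y.card := by
    have : F = F.filter (fun C => True) := by simp
    have h0 := Finset.card_filter_add_card_filter_not
      (s := F) (p := fun C => Disjoint ({u, v} : Finset α) C)
    rw [← hY] at h0
    omega
  have hunion : (F.filter fun C => ¬ Disjoint ({u, v} : Finset α) C)
      = (F.filter fun C => u ∈ C) ∪ (F.filter fun C => v ∈ C) := by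
    ext C
    simp only [mem_filter, Finset.mem_union, disj_pair_iff]
    tauto
  have hinter : (F.filter fun C => u ∈ C) ∩ (F.filter fun C => v ∈ C)
      = F.filter fun C => u ∈ C ∧ v ∈ C := by
    ext C
    simp only [mem_filter, Finset.mem_inter]
    tauto
  have hie := Finset.card_union_add_card_inter (F.filter fun C => u ∈ C) (F.filter fun C => v ∈ C)
  have hdeg : 6 * s + 6 + tt F {u, v} ≤ dg F u + dg F v + (s + 7) := by
    unfold dg
    rw [tt_pair_eq F u v]
    rw [← hunion, hinter] at hie
    omega
  rcases le_total (dg F u) (dg F v) with hle | hle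
  · exact ⟨v, by omega⟩
  · exact ⟨u, by omega⟩

lemma pair_ne {a w w' : α} (hw : w ≠ a) (hne : w ≠ w') :
    ({a, w} : Finset α) ≠ ({a, w'} : Finset α) := by
  intro h
  have : w ∈ ({a, w'} : Finset α) := by rw [← h]; simp
  simp only [Finset.mem_insert, Finset.mem_singleton] at this
  tauto

lemma third_singleton {E q : Finset α} {z : α} (hE3 : E.card = 3) (hq : q.card = 2)
    (hqE : q ⊆ E) (hz : z ∈ E \ q) : E = insert z q := by
  have h1 : (E \ q).card = 1 := by rw [Finset.card_sdiff_of_subset hqE, hE3, hq]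
  have h2 : E \ q = {z} := by
    apply (Finset.eq_of_subset_of_card_le (Finset.singleton_subset_iff.2 hz) ?_).symm
    rw [Finset.card_singleton]; omega
  calc E = q ∪ E \ q := (Finset.union_sdiff_of_subset hqE).symm
  _ = q ∪ {z} := by rw [h2]
  _ = insert z q := by rw [Finset.union_comm, ← Finset.insert_eq]

lemma thirds_card (F : Finset (Finset α)) (hu : ∀ A ∈ F, A.card = 3)
    {q : Finset α} (hq : q.card = 2) :
    ((F.filter fun E => q ⊆ E).biUnion fun E => E \ q).card = tt F q := by
  rw [Finset.card_biUnion]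
  · have hone : ∀ E ∈ (F.filter fun E => q ⊆ E), (E \ q).card = 1 := by
      intro E hE
      simp only [mem_filter] at hE
      rw [Finset.card_sdiff_of_subset hE.2, hu E hE.1, hq]
    rw [Finset.sum_congr rfl hone]
    simp [tt]
  · intro E hE E' hE' hne
    simp only [Finset.mem_coe, mem_filter] at hE hE'
    rw [Function.onFun, Finset.disjoint_left]
    intro z hz hz'
    apply hne
    rw [third_singleton (hu E hE.1) hq hE.2 hz, third_singleton (hu E' hE'.1) hq hE'.2 hz']

lemma no_edge_two_supers (F : Finset (Finset α)) (hu : ∀ A ∈ F, A.card = 3)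
    (hd1 : ∀ A ∈ F, 1 ≤ dd F A) (hds : ∀ A ∈ F, dd F A ≤ s)
    {a w w' : α} (hwa : w ≠ a) (hw'a : w' ≠ a) (hne : w ≠ w')
    (hsup : s + 11 ≤ 2 * tt F {a, w}) (hsup' : s + 11 ≤ 2 * tt F {a, w'})
    {E : Finset α} (hE : E ∈ F) (ha : a ∈ E) (hw : w ∈ E) (hw' : w' ∈ E) : False := by
  obtain ⟨D, hD⟩ := Finset.card_pos.1 (lt_of_lt_of_le Nat.zero_lt_one (hd1 E hE))
  simp only [mem_filter] at hD
  obtain ⟨hDF, hed⟩ := hD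
  have hdl := Finset.disjoint_left.1 hed
  have hpne : ({a, w} : Finset α) ≠ ({a, w'} : Finset α) := by
    intro h
    have : w' ∈ ({a, w} : Finset α) := by rw [h]; simp
    simp only [Finset.mem_insert, Finset.mem_singleton] at this
    rcases this with h' | h'
    · exact hw'a h'
    · exact hne h'.symm
  exact dagger F hu hds (pair_card (Ne.symm hwa)) (pair_card (Ne.symm hw'a)) hpne
    hsup hsup' hDF
    (disj_pair_iff.2 ⟨fun hc => hdl ha hc, fun hc => hdl hw hc⟩)
    (disj_pair_iff.2 ⟨fun hc => hdl ha hc, fun hc => hdl hw' hc⟩)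

lemma caseW3 (F : Finset (Finset α)) (hu : ∀ A ∈ F, A.card = 3)
    (hd1 : ∀ A ∈ F, 1 ≤ dd F A) (hds : ∀ A ∈ F, dd F A ≤ s)
    (hc : F.card = 6 * s + 6) (hs : 625 < s)
    (a b c d : α) (hba : b ≠ a) (hca : c ≠ a) (hda : d ≠ a)
    (hbc : b ≠ c) (hbd : b ≠ d) (hcd : c ≠ d)
    (hWb : dg F a ≤ s + 3 * tt F {a, b})
    (hWc : dg F a ≤ s + 3 * tt F {a, c})
    (hWd : dg F a ≤ s + 3 * tt F {a, d})
    (hdga : 49 * s ≤ 18 * dg F a + 3)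
    (hW1 : ∀ D ∈ F, a ∉ D → (({b, c, d} : Finset α) \ D).card ≤ 1)
    (hnW : ∀ w, w ≠ a → w ∉ ({b, c, d} : Finset α) → s + 3 * tt F {a, w} < dg F a) :
    (s + 11 ≤ 2 * tt F {b, c}) ∧ (s + 11 ≤ 2 * tt F {b, d}) ∧ (s + 11 ≤ 2 * tt F {c, d}) := by
  have hsab : s + 11 ≤ 2 * tt F {a, b} := by omega
  have hsac : s + 11 ≤ 2 * tt F {a, c} := by omega
  have hsad : s + 11 ≤ 2 * tt F {a, d} := by omega
  have hsup_all : ∀ w ∈ ({b, c, d} : Finset α), s + 11 ≤ 2 * tt F {a, w} := by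
    intro w hw
    simp only [Finset.mem_insert, Finset.mem_singleton] at hw
    rcases hw with rfl | rfl | rfl <;> assumption
  have hne_a : ∀ w ∈ ({b, c, d} : Finset α), w ≠ a := by
    intro w hw
    simp only [Finset.mem_insert, Finset.mem_singleton] at hw
    rcases hw with rfl | rfl | rfl <;> assumption
  -- no edge contains a and two elements of {b,c,d}
  have hno2 : ∀ E ∈ F, a ∈ E → ∀ w w', w ∈ ({b, c, d} : Finset α) →
      w' ∈ ({b, c, d} : Finset α) → w ≠ w' → ¬(w ∈ E ∧ w' ∈ E) := by
    intro E hE haE w w' hw hw' hww' hcon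
    exact no_edge_two_supers F hu hd1 hds (hne_a w hw) (hne_a w' hw') hww'
      (hsup_all w hw) (hsup_all w' hw') hE haE hcon.1 hcon.2
  have hmembc : b ∈ ({b, c, d} : Finset α) := by simp
  have hmemc : c ∈ ({b, c, d} : Finset α) := by simp
  have hmemd : d ∈ ({b, c, d} : Finset α) := by simp
  -- partition of the edges through a
  have hsplit1 := Finset.card_filter_add_card_filter_not
    (s := F.filter fun E => a ∈ E) (p := fun E => b ∈ E)
  have hsplit2 := Finset.card_filter_add_card_filter_not
    (s := (F.filter fun E => a ∈ E).filter fun E => ¬ b ∈ E) (p := fun E => c ∈ E)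
  have hsplit3 := Finset.card_filter_add_card_filter_not
    (s := ((F.filter fun E => a ∈ E).filter fun E => ¬ b ∈ E).filter fun E => ¬ c ∈ E)
    (p := fun E => d ∈ E)
  have hX1 : ((F.filter fun E => a ∈ E).filter fun E => b ∈ E).card = tt F {a, b} := by
    rw [tt_pair_eq, Finset.filter_filter]
  have hX2 : (((F.filter fun E => a ∈ E).filter fun E => ¬ b ∈ E).filter fun E => c ∈ E).card
      = tt F {a, c} := by
    rw [tt_pair_eq]
    congr 1
    rw [Finset.filter_filter, Finset.filter_filter]
    apply Finset.Subset.antisymm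
    · intro E hE
      simp only [mem_filter] at hE ⊢
      tauto
    · intro E hE
      simp only [mem_filter] at hE ⊢
      refine ⟨hE.1, hE.2.1, ?_, hE.2.2⟩
      intro hbE
      exact hno2 E hE.1 hE.2.1 b c hmembc hmemc hbc ⟨hbE, hE.2.2⟩
  have hX3 : ((((F.filter fun E => a ∈ E).filter fun E => ¬ b ∈ E).filter
      fun E => ¬ c ∈ E).filter fun E => d ∈ E).card = tt F {a, d} := by
    rw [tt_pair_eq]
    congr 1
    rw [Finset.filter_filter, Finset.filter_filter, Finset.filter_filter]
    apply Finset.Subset.antisymm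
    · intro E hE
      simp only [mem_filter] at hE ⊢
      tauto
    · intro E hE
      simp only [mem_filter] at hE ⊢
      refine ⟨hE.1, hE.2.1, ?_, ?_, hE.2.2⟩
      · intro hbE
        exact hno2 E hE.1 hE.2.1 b d hmembc hmemd hbd ⟨hbE, hE.2.2⟩
      · intro hcE
        exact hno2 E hE.1 hE.2.1 c d hmemc hmemd hcd ⟨hcE, hE.2.2⟩
  set A0 := (((F.filter fun E => a ∈ E).filter fun E => ¬ b ∈ E).filter
      fun E => ¬ c ∈ E).filter fun E => ¬ d ∈ E with hA0def
  have hpart : dg F a = tt F {a, b} + tt F {a, c} + tt F {a, d} + A0.card := by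
    unfold dg
    omega
  -- the witness edge D' = {b, c, y}
  have hFadne : (F.filter fun E => ({a, d} : Finset α) ⊆ E).Nonempty := by
    apply Finset.card_pos.1
    have : tt F {a, d} = (F.filter fun E => ({a, d} : Finset α) ⊆ E).card := rfl
    omega
  obtain ⟨E1, hE1⟩ := hFadne
  simp only [mem_filter] at hE1
  obtain ⟨hE1F, hadE1⟩ := hE1
  have haE1 : a ∈ E1 := hadE1 (by simp)
  have hdE1 : d ∈ E1 := hadE1 (by simp)
  obtain ⟨D', hD'⟩ := Finset.card_pos.1 (lt_of_lt_of_le Nat.zero_lt_one (hd1 E1 hE1F))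
  simp only [mem_filter] at hD'
  obtain ⟨hD'F, hedD'⟩ := hD'
  have hdl := Finset.disjoint_left.1 hedD'
  have haD' : a ∉ D' := fun h => hdl haE1 h
  have hdD' : d ∉ D' := fun h => hdl hdE1 h
  have hdisjadD' : Disjoint ({a, d} : Finset α) D' := disj_pair_iff.2 ⟨haD', hdD'⟩
  have hbD' : b ∈ D' := by
    by_contra hbD'
    exact dagger F hu hds (pair_card (Ne.symm hda)) (pair_card (Ne.symm hba))
      (pair_ne hda (Ne.symm hbd)) hsad hsab hD'F hdisjadD'
      (disj_pair_iff.2 ⟨haD', hbD'⟩)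
  have hcD' : c ∈ D' := by
    by_contra hcD'
    exact dagger F hu hds (pair_card (Ne.symm hda)) (pair_card (Ne.symm hca))
      (pair_ne hda (Ne.symm hcd)) hsad hsac hD'F hdisjadD'
      (disj_pair_iff.2 ⟨haD', hcD'⟩)
  have hbcD' : ({b, c} : Finset α) ⊆ D' := by
    intro x hx
    simp only [Finset.mem_insert, Finset.mem_singleton] at hx
    rcases hx with rfl | rfl
    · exact hbD'
    · exact hcD'
  have hy1 : (D' \ ({b, c} : Finset α)).card = 1 := by
    rw [Finset.card_sdiff_of_subset hbcD', hu D' hD'F, pair_card hbc]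
  obtain ⟨y, hy⟩ := Finset.card_eq_one.1 hy1
  have hyD' : y ∈ D' := by
    have : y ∈ D' \ ({b, c} : Finset α) := by rw [hy]; simp
    exact (Finset.mem_sdiff.1 this).1
  have hynbc : y ∉ ({b, c} : Finset α) := by
    have : y ∈ D' \ ({b, c} : Finset α) := by rw [hy]; simp
    exact (Finset.mem_sdiff.1 this).2
  have hyb : y ≠ b := fun h => hynbc (by simp [h])
  have hyc : y ≠ c := fun h => hynbc (by simp [h])
  have hya : y ≠ a := fun h => haD' (h ▸ hyD')
  have hyd : y ≠ d := fun h => hdD' (h ▸ hyD')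
  have hynW : y ∉ ({b, c, d} : Finset α) := by simp [hyb, hyc, hyd]
  have htay : s + 3 * tt F {a, y} < dg F a := hnW y hya hynW
  have hD'eq : D' = {b, c} ∪ {y} := by
    rw [← hy]
    exact (Finset.union_sdiff_of_subset hbcD').symm
  -- bounding A0
  have hbadad := bad3 F hu (pair_card (Ne.symm hda).symm ▸ pair_card (Ne.symm hda))
    hdisjadD' (hu D' hD'F)
  have hsplitad := filter_split_le F (fun E => ({a, d} : Finset α) ⊆ E)
    (fun E => Disjoint E D')
  have hA0sub : (A0.filter fun E => ¬ Disjoint E D') ⊆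
      F.filter fun E => ({a, y} : Finset α) ⊆ E := by
    intro E hE
    simp only [hA0def, mem_filter] at hE
    obtain ⟨⟨⟨⟨⟨hEF, haE⟩, hbE⟩, hcE⟩, hdE⟩, hnd⟩ := hE
    obtain ⟨x, hx⟩ := not_disjoint_iff_nonempty_inter.1 hnd
    simp only [mem_inter] at hx
    have hxD' : x ∈ ({b, c} : Finset α) ∪ {y} := hD'eq ▸ hx.2
    simp only [Finset.mem_union, Finset.mem_insert, Finset.mem_singleton] at hxD'
    have hxy : x = y := by
      rcases hxD' with (rfl | rfl) | rfl
      · exact absurd hx.1 hbE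
      · exact absurd hx.1 hcE
      · rfl
    simp only [mem_filter]
    refine ⟨hEF, ?_⟩
    intro z hz
    simp only [Finset.mem_insert, Finset.mem_singleton] at hz
    rcases hz with rfl | rfl
    · exact haE
    · exact hxy ▸ hx.1
  have hA0split := Finset.card_filter_add_card_filter_not
    (s := A0) (p := fun E => Disjoint E D')
  have hA0le : A0.card ≤ (A0.filter fun E => Disjoint E D').card + tt F {a, y} := by
    have := Finset.card_le_card hA0sub
    unfold tt
    omega
  have hBdisj : Disjoint ((F.filter fun E => ({a, d} : Finset α) ⊆ E).filter
      fun E => Disjoint E D') (A0.filter fun E => Disjoint E D') := by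
    rw [Finset.disjoint_left]
    intro E hE hE'
    simp only [mem_filter] at hE
    simp only [hA0def, mem_filter] at hE'
    exact hE'.1.2 (hE.1.2 (by simp))
  have hBunion : ((F.filter fun E => ({a, d} : Finset α) ⊆ E).filter
      fun E => Disjoint E D') ∪ (A0.filter fun E => Disjoint E D') ⊆
      F.filter fun B => Disjoint D' B := by
    intro E hE
    rcases Finset.mem_union.1 hE with h | h
    · simp only [mem_filter] at h ⊢
      exact ⟨h.1.1, h.2.symm⟩
    · simp only [hA0def, mem_filter] at h
      simp only [mem_filter]
      exact ⟨h.1.1.1.1.1, h.2.symm⟩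
  have hBsum : ((F.filter fun E => ({a, d} : Finset α) ⊆ E).filter
      fun E => Disjoint E D').card + (A0.filter fun E => Disjoint E D').card ≤ s := by
    rw [← Finset.card_union_of_disjoint hBdisj]
    exact le_trans (Finset.card_le_card hBunion) (hds D' hD'F)
  have hA0bound : A0.card ≤ s + 2 := by
    have h1 : tt F {a, d} ≤ ((F.filter fun E => ({a, d} : Finset α) ⊆ E).filter
        fun E => Disjoint E D').card + 3 := by
      unfold tt
      omega
    omega
  have htable : tt F {a, b} ≤ s + 3 := t_le F hu hd1 hds (pair_card (Ne.symm hba))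
  have htacle : tt F {a, c} ≤ s + 3 := t_le F hu hd1 hds (pair_card (Ne.symm hca))
  have htadle : tt F {a, d} ≤ s + 3 := t_le F hu hd1 hds (pair_card (Ne.symm hda))
  have hdga_up : dg F a ≤ 4 * s + 11 := by omega
  -- edges avoiding a
  have hNotAsplit := Finset.card_filter_add_card_filter_not
    (s := F) (p := fun E => a ∈ E)
  have htwo : ∀ D ∈ F, a ∉ D → ∀ w w', w ≠ w' → w ∈ ({b, c, d} : Finset α) →
      w' ∈ ({b, c, d} : Finset α) → w ∉ D → w' ∉ D → False := by
    intro D hD haD w w' hww' hw hw' hwD hw'D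
    have hsub : ({w, w'} : Finset α) ⊆ ({b, c, d} : Finset α) \ D := by
      intro x hx
      simp only [Finset.mem_insert, Finset.mem_singleton] at hx
      rcases hx with rfl | rfl <;> simp only [Finset.mem_sdiff] <;> tauto
    have := Finset.card_le_card hsub
    rw [pair_card hww'] at this
    have := hW1 D hD haD
    omega
  have hcover : (F.filter fun E => ¬ a ∈ E) ⊆
      (F.filter fun E => ({b, c} : Finset α) ⊆ E) ∪
      (F.filter fun E => ({b, d} : Finset α) ⊆ E) ∪
      (F.filter fun E => ({c, d} : Finset α) ⊆ E) := by
    intro D hD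
    simp only [mem_filter] at hD
    obtain ⟨hDF, haD⟩ := hD
    simp only [Finset.mem_union, mem_filter]
    by_cases hbD : b ∈ D
    · by_cases hcD : c ∈ D
      · left; left
        exact ⟨hDF, by intro x hx; simp only [Finset.mem_insert, Finset.mem_singleton] at hx
                       rcases hx with rfl | rfl <;> assumption⟩
      · by_cases hdD : d ∈ D
        · left; right
          exact ⟨hDF, by intro x hx; simp only [Finset.mem_insert, Finset.mem_singleton] at hx
                         rcases hx with rfl | rfl <;> assumption⟩
        · exact absurd (htwo D hDF haD c d hcd hmemc hmemd hcD hdD) (by tauto)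
    · by_cases hcD : c ∈ D
      · by_cases hdD : d ∈ D
        · right
          exact ⟨hDF, by intro x hx; simp only [Finset.mem_insert, Finset.mem_singleton] at hx
                         rcases hx with rfl | rfl <;> assumption⟩
        · exact absurd (htwo D hDF haD b d hbd hmembc hmemd hbD hdD) (by tauto)
      · exact absurd (htwo D hDF haD b c hbc hmembc hmemc hbD hcD) (by tauto)
  have hmsum : (F.filter fun E => ¬ a ∈ E).card ≤
      tt F {b, c} + tt F {b, d} + tt F {c, d} := by
    refine le_trans (Finset.card_le_card hcover) ?_
    refine le_trans (Finset.card_union_le _ _) ?_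
    have := Finset.card_union_le (F.filter fun E => ({b, c} : Finset α) ⊆ E)
      (F.filter fun E => ({b, d} : Finset α) ⊆ E)
    unfold tt
    omega
  -- the key degree bound
  have hkey : ∀ w1 w2 : α, w1 ∈ ({b, c, d} : Finset α) → w2 ∈ ({b, c, d} : Finset α) →
      w1 ≠ w2 → 2 * s ≤ 3 * tt F {w1, w2} + 5 → dg F a ≤ 3 * s + 36 := by
    intro w1 w2 hw1 hw2 hw12 hbig
    set Z := (F.filter fun E => ({w1, w2} : Finset α) ⊆ E).biUnion (fun E => E \ {w1, w2})
      with hZdef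
    have hZcard : Z.card = tt F {w1, w2} := thirds_card F hu (pair_card hw12)
    have haZ : a ∉ Z := by
      intro haZ
      simp only [hZdef, Finset.mem_biUnion, mem_filter] at haZ
      obtain ⟨E, ⟨hEF, hqE⟩, haE⟩ := haZ
      have haE' := (Finset.mem_sdiff.1 haE).1
      exact no_edge_two_supers F hu hd1 hds (hne_a w1 hw1) (hne_a w2 hw2) hw12
        (hsup_all w1 hw1) (hsup_all w2 hw2) hEF haE' (hqE (by simp)) (hqE (by simp))
    have hlink := link_sum F hu haZ
    have hzex : ∃ z ∈ Z, tt F {a, z} ≤ 30 := by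
      by_contra hcon
      push_neg at hcon
      have h31 : ∀ z ∈ Z, 31 ≤ tt F {a, z} := fun z hz => hcon z hz
      have := Finset.sum_le_sum h31
      rw [Finset.sum_const, smul_eq_mul] at this
      have hdgup2 : 2 * dg F a ≤ 8 * s + 22 := by omega
      omega
    obtain ⟨z, hzZ, hz30⟩ := hzex
    simp only [hZdef, Finset.mem_biUnion, mem_filter] at hzZ
    obtain ⟨Estar, ⟨hEsF, hqEs⟩, hzEs⟩ := hzZ
    have hEseq : Estar = insert z {w1, w2} :=
      third_singleton (hu Estar hEsF) (pair_card hw12) hqEs hzEs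
    have hznq : z ∉ ({w1, w2} : Finset α) := (Finset.mem_sdiff.1 hzEs).2
    have haEs : a ∉ Estar := by
      rw [hEseq]
      simp only [Finset.mem_insert, Finset.mem_singleton]
      push_neg
      refine ⟨?_, fun h => (hne_a w1 hw1) h.symm, fun h => (hne_a w2 hw2) h.symm⟩
      intro h
      subst h
      exact haZ (by
        simp only [hZdef, Finset.mem_biUnion, mem_filter]
        exact ⟨Estar, ⟨hEsF, hqEs⟩, hzEs⟩)
    have hstep := step6 (s := s) F hu hds hEsF haEs
    have hsumEs : ∑ w ∈ Estar, tt F {a, w} = tt F {a, z} + (tt F {a, w1} + tt F {a, w2}) := by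
      rw [hEseq]
      rw [Finset.sum_insert (by exact hznq)]
      congr 1
      rw [Finset.sum_insert (by simp [hw12]), Finset.sum_singleton]
    have hw1le : tt F {a, w1} ≤ s + 3 := t_le F hu hd1 hds (pair_card (Ne.symm (hne_a w1 hw1)))
    have hw2le : tt F {a, w2} ≤ s + 3 := t_le F hu hd1 hds (pair_card (Ne.symm (hne_a w2 hw2)))
    omega
  have hmax : 2 * s ≤ 3 * tt F {b, c} + 5 ∨ 2 * s ≤ 3 * tt F {b, d} + 5 ∨
      2 * s ≤ 3 * tt F {c, d} + 5 := by omega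
  have hdgfinal : dg F a ≤ 3 * s + 36 := by
    rcases hmax with h | h | h
    · exact hkey b c hmembc hmemc hbc h
    · exact hkey b d hmembc hmemd hbd h
    · exact hkey c d hmemc hmemd hcd h
  have htbcle : tt F {b, c} ≤ s + 3 := t_le F hu hd1 hds (pair_card hbc)
  have htbdle : tt F {b, d} ≤ s + 3 := t_le F hu hd1 hds (pair_card hbd)
  have htcdle : tt F {c, d} ≤ s + 3 := t_le F hu hd1 hds (pair_card hcd)
  refine ⟨by omega, by omega, by omega⟩

lemma sum_over_three {D : Finset α} {u : α} (hD3 : D.card = 3) (huD : u ∈ D) (f : α → ℕ) :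
    ∃ y z : α, y ≠ z ∧ y ∈ D ∧ z ∈ D ∧ y ≠ u ∧ z ≠ u ∧
      (∑ w ∈ D, f w) = f u + f y + f z := by
  have hsub : ({u} : Finset α) ⊆ D := Finset.singleton_subset_iff.2 huD
  have h2 : (D \ {u}).card = 2 := by
    rw [Finset.card_sdiff_of_subset hsub, hD3, Finset.card_singleton]
  obtain ⟨y, z, hyz, hyzeq⟩ := Finset.card_eq_two.1 h2
  have hymem : y ∈ D \ {u} := by rw [hyzeq]; simp
  have hzmem : z ∈ D \ {u} := by rw [hyzeq]; simp
  have hyD := (Finset.mem_sdiff.1 hymem).1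
  have hzD := (Finset.mem_sdiff.1 hzmem).1
  have hyu : y ≠ u := by
    have := (Finset.mem_sdiff.1 hymem).2; simpa using this
  have hzu : z ≠ u := by
    have := (Finset.mem_sdiff.1 hzmem).2; simpa using this
  refine ⟨y, z, hyz, hyD, hzD, hyu, hzu, ?_⟩
  have hDeq : D = {u} ∪ (D \ {u}) := (Finset.union_sdiff_of_subset hsub).symm
  rw [hDeq, hyzeq]
  rw [Finset.sum_union (by
    rw [Finset.disjoint_left]
    intro x hx
    simp only [Finset.mem_singleton] at hx
    subst hx
    simp only [Finset.mem_insert, Finset.mem_singleton]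
    push_neg
    exact ⟨Ne.symm hyu, Ne.symm hzu⟩)]
  rw [Finset.sum_singleton, Finset.sum_insert (by simpa using hyz), Finset.sum_singleton]
  ring

lemma thirds_card2 (F : Finset (Finset α)) (hu : ∀ A ∈ F, A.card = 3)
    {q : Finset α} (hq : q.card = 2) {M : Finset (Finset α)} (hMF : M ⊆ F)
    (hqM : ∀ D ∈ M, q ⊆ D) :
    (M.biUnion fun D => D \ q).card = M.card := by
  rw [Finset.card_biUnion]
  · have hone : ∀ D ∈ M, (D \ q).card = 1 := by
      intro D hD
      rw [Finset.card_sdiff_of_subset (hqM D hD), hu D (hMF hD), hq]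
    rw [Finset.sum_congr rfl hone]
    simp
  · intro D hD D' hD' hne
    rw [Function.onFun, Finset.disjoint_left]
    intro z hz hz'
    apply hne
    rw [third_singleton (hu D (hMF hD)) hq (hqM D hD) hz,
      third_singleton (hu D' (hMF hD')) hq (hqM D' hD') hz']

lemma caseW2 (F : Finset (Finset α)) (hu : ∀ A ∈ F, A.card = 3)
    (hd1 : ∀ A ∈ F, 1 ≤ dd F A) (hds : ∀ A ∈ F, dd F A ≤ s)
    (hc : F.card = 6 * s + 6) (hs : 625 < s)
    (a b c : α) (hba : b ≠ a) (hca : c ≠ a) (hbc : b ≠ c)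
    (hWb : dg F a ≤ s + 3 * tt F {a, b})
    (hWc : dg F a ≤ s + 3 * tt F {a, c})
    (hdga : 49 * s ≤ 18 * dg F a + 3)
    (hMeet : ∀ D ∈ F, a ∉ D → b ∈ D ∨ c ∈ D)
    (hnW : ∀ w, w ≠ a → w ∉ ({b, c} : Finset α) → s + 3 * tt F {a, w} < dg F a) :
    False := by
  have hsab : s + 11 ≤ 2 * tt F {a, b} := by omega
  have hsac : s + 11 ≤ 2 * tt F {a, c} := by omega
  have htable : tt F {a, b} ≤ s + 3 := t_le F hu hd1 hds (pair_card (Ne.symm hba))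
  have htacle : tt F {a, c} ≤ s + 3 := t_le F hu hd1 hds (pair_card (Ne.symm hca))
  have hno2abc : ∀ E ∈ F, ¬(a ∈ E ∧ b ∈ E ∧ c ∈ E) := by
    intro E hE hcon
    exact no_edge_two_supers F hu hd1 hds hba hca hbc hsab hsac hE hcon.1 hcon.2.1 hcon.2.2
  set Mc := F.filter (fun D => a ∉ D ∧ b ∉ D) with hMcdef
  set Mb := F.filter (fun D => a ∉ D ∧ b ∈ D ∧ c ∉ D) with hMbdef
  set Mbc := F.filter (fun D => a ∉ D ∧ b ∈ D ∧ c ∈ D) with hMbcdef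
  have hMc_c : ∀ D ∈ Mc, c ∈ D := by
    intro D hD
    simp only [hMcdef, mem_filter] at hD
    rcases hMeet D hD.1 hD.2.1 with h | h
    · exact absurd h hD.2.2
    · exact h
  have hMcF : Mc ⊆ F := Finset.filter_subset _ F
  have hMbF : Mb ⊆ F := Finset.filter_subset _ F
  -- size bounds on Mc, Mb, Mbc
  have hMcle : Mc.card ≤ s + 6 := by
    by_contra hcon
    push_neg at hcon
    have hcnt := lem_cnt (s := s) F hu hds (pair_card (Ne.symm hba)) hMcF (by
      intro D hD
      simp only [hMcdef, mem_filter] at hD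
      exact disj_pair_iff.2 ⟨hD.2.1, hD.2.2⟩)
    have := arith1 hcnt (by omega : s + 7 ≤ Mc.card) (by omega : 3 ≤ tt F {a, b})
    omega
  have hMble : Mb.card ≤ s + 6 := by
    by_contra hcon
    push_neg at hcon
    have hcnt := lem_cnt (s := s) F hu hds (pair_card (Ne.symm hca)) hMbF (by
      intro D hD
      simp only [hMbdef, mem_filter] at hD
      exact disj_pair_iff.2 ⟨hD.2.1, hD.2.2.2⟩)
    have := arith1 hcnt (by omega : s + 7 ≤ Mb.card) (by omega : 3 ≤ tt F {a, c})
    omega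
  have hMbcle : Mbc.card ≤ s + 3 := by
    have hsub : Mbc ⊆ F.filter (fun E => ({b, c} : Finset α) ⊆ E) := by
      intro D hD
      simp only [hMbcdef, mem_filter] at hD
      simp only [mem_filter]
      refine ⟨hD.1, ?_⟩
      intro x hx
      simp only [Finset.mem_insert, Finset.mem_singleton] at hx
      rcases hx with rfl | rfl
      · exact hD.2.2.1
      · exact hD.2.2.2
    exact le_trans (Finset.card_le_card hsub) (t_le F hu hd1 hds (pair_card hbc))
  -- partition of F
  have hpartition : dg F a + Mb.card + Mc.card + Mbc.card = 6 * s + 6 := by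
    have h1 := Finset.card_filter_add_card_filter_not (s := F) (p := fun E => a ∈ E)
    have h2 := Finset.card_filter_add_card_filter_not
      (s := F.filter fun E => ¬ a ∈ E) (p := fun E => b ∈ E)
    have h3 := Finset.card_filter_add_card_filter_not
      (s := (F.filter fun E => ¬ a ∈ E).filter fun E => b ∈ E) (p := fun E => c ∈ E)
    have e1 : ((F.filter fun E => ¬ a ∈ E).filter fun E => ¬ b ∈ E) = Mc := by
      rw [hMcdef, Finset.filter_filter]
    have e2 : (((F.filter fun E => ¬ a ∈ E).filter fun E => b ∈ E).filter fun E => c ∈ E)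
        = Mbc := by
      rw [hMbcdef, Finset.filter_filter, Finset.filter_filter]
    have e3 : (((F.filter fun E => ¬ a ∈ E).filter fun E => b ∈ E).filter fun E => ¬ c ∈ E)
        = Mb := by
      rw [hMbdef, Finset.filter_filter, Finset.filter_filter]
    rw [e1] at h2
    rw [e2, e3] at h3
    unfold dg
    omega
  -- partition of the edges through a
  have hA0part : ∃ A0 : Finset (Finset α),
      A0 = F.filter (fun E => a ∈ E ∧ b ∉ E ∧ c ∉ E) ∧
      dg F a = tt F {a, b} + tt F {a, c} + A0.card := by
    refine ⟨_, rfl, ?_⟩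
    have h1 := Finset.card_filter_add_card_filter_not
      (s := F.filter fun E => a ∈ E) (p := fun E => b ∈ E)
    have h2 := Finset.card_filter_add_card_filter_not
      (s := (F.filter fun E => a ∈ E).filter fun E => ¬ b ∈ E) (p := fun E => c ∈ E)
    have e1 : ((F.filter fun E => a ∈ E).filter fun E => b ∈ E).card = tt F {a, b} := by
      rw [tt_pair_eq, Finset.filter_filter]
    have e2 : (((F.filter fun E => a ∈ E).filter fun E => ¬ b ∈ E).filter fun E => c ∈ E).card
        = tt F {a, c} := by
      rw [tt_pair_eq]
      congr 1
      rw [Finset.filter_filter, Finset.filter_filter]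
      apply Finset.Subset.antisymm
      · intro E hE
        simp only [mem_filter] at hE ⊢
        tauto
      · intro E hE
        simp only [mem_filter] at hE ⊢
        refine ⟨hE.1, hE.2.1, ?_, hE.2.2⟩
        intro hbE
        exact hno2abc E hE.1 ⟨hE.2.1, hbE, hE.2.2⟩
    have e3 : (((F.filter fun E => a ∈ E).filter fun E => ¬ b ∈ E).filter fun E => ¬ c ∈ E)
        = F.filter (fun E => a ∈ E ∧ b ∉ E ∧ c ∉ E) := by
      rw [Finset.filter_filter, Finset.filter_filter]
    rw [← e1, ← e2, ← e3]
    unfold dg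
    omega
  obtain ⟨A0, hA0def, hA0part⟩ := hA0part
  -- Mc is nonempty
  have hMcne : Mc.Nonempty := by
    have htabpos : 1 ≤ tt F {a, b} := by omega
    have : (F.filter fun E => ({a, b} : Finset α) ⊆ E).Nonempty := by
      apply Finset.card_pos.1
      have : tt F {a, b} = (F.filter fun E => ({a, b} : Finset α) ⊆ E).card := rfl
      omega
    obtain ⟨E, hE⟩ := this
    simp only [mem_filter] at hE
    obtain ⟨D, hD⟩ := Finset.card_pos.1 (lt_of_lt_of_le Nat.zero_lt_one (hd1 E hE.1))
    simp only [mem_filter] at hD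
    have hdl := Finset.disjoint_left.1 hD.2
    refine ⟨D, ?_⟩
    simp only [hMcdef, mem_filter]
    exact ⟨hD.1, fun h => hdl (hE.2 (by simp)) h, fun h => hdl (hE.2 (by simp)) h⟩
  obtain ⟨D0, hD0⟩ := hMcne
  have hD0F : D0 ∈ F := hMcF hD0
  have hD0mem := hD0
  simp only [hMcdef, mem_filter] at hD0mem
  obtain ⟨_, haD0, hbD0⟩ := hD0mem
  have hcD0 : c ∈ D0 := hMc_c D0 hD0
  -- upper bound on dg a
  obtain ⟨y0, z0, hyz0, hy0D, hz0D, hy0c, hz0c, hsum0⟩ :=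
    sum_over_three (hu D0 hD0F) hcD0 (fun w => tt F {a, w})
  have hy0a : y0 ≠ a := fun h => haD0 (h ▸ hy0D)
  have hz0a : z0 ≠ a := fun h => haD0 (h ▸ hz0D)
  have hdgup : dg F a ≤ 4 * s + 12 := by
    have hstep := step6 (s := s) F hu hds hD0F haD0
    have h1 : tt F {a, y0} ≤ s + 3 := t_le F hu hd1 hds (pair_card (Ne.symm hy0a))
    have h2 : tt F {a, z0} ≤ s + 3 := t_le F hu hd1 hds (pair_card (Ne.symm hz0a))
    omega
  have hdglo : 3 * s ≤ dg F a + 9 := by omega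
  -- every edge in Mc (resp. Mb) contains a demi vertex
  have hdemi : ∀ D ∈ Mc, ∃ w, w ∈ D ∧ w ≠ a ∧ w ∉ ({b, c} : Finset α) ∧
      s ≤ 2 * tt F {a, w} + 12 := by
    intro D hD
    have hDF : D ∈ F := hMcF hD
    have hDmem := hD
    simp only [hMcdef, mem_filter] at hDmem
    obtain ⟨_, haD, hbD⟩ := hDmem
    have hcD : c ∈ D := hMc_c D hD
    obtain ⟨y, z, hyz, hyD, hzD, hyc, hzc, hsum⟩ :=
      sum_over_three (hu D hDF) hcD (fun w => tt F {a, w})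
    have hstep := step6 (s := s) F hu hds hDF haD
    have hya : y ≠ a := fun h => haD (h ▸ hyD)
    have hza : z ≠ a := fun h => haD (h ▸ hzD)
    have hyb : y ≠ b := fun h => hbD (h ▸ hyD)
    have hzb : z ≠ b := fun h => hbD (h ▸ hzD)
    rcases le_total (tt F {a, y}) (tt F {a, z}) with hle | hle
    · exact ⟨z, hzD, hza, by simp [hzb, hzc], by omega⟩
    · exact ⟨y, hyD, hya, by simp [hyb, hyc], by omega⟩
  have hdemib : ∀ D ∈ Mb, ∃ w, w ∈ D ∧ w ≠ a ∧ w ∉ ({b, c} : Finset α) ∧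
      s ≤ 2 * tt F {a, w} + 12 := by
    intro D hD
    have hDF : D ∈ F := hMbF hD
    have hDmem := hD
    simp only [hMbdef, mem_filter] at hDmem
    obtain ⟨_, haD, hbD, hcD⟩ := hDmem
    obtain ⟨y, z, hyz, hyD, hzD, hyb, hzb, hsum⟩ :=
      sum_over_three (hu D hDF) hbD (fun w => tt F {a, w})
    have hstep := step6 (s := s) F hu hds hDF haD
    have hya : y ≠ a := fun h => haD (h ▸ hyD)
    have hza : z ≠ a := fun h => haD (h ▸ hzD)
    have hyc : y ≠ c := fun h => hcD (h ▸ hyD)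
    have hzc : z ≠ c := fun h => hcD (h ▸ hzD)
    rcases le_total (tt F {a, y}) (tt F {a, z}) with hle | hle
    · exact ⟨z, hzD, hza, by simp [hzb, hzc], by omega⟩
    · exact ⟨y, hyD, hya, by simp [hyb, hyc], by omega⟩
  -- demi vertices are in every edge avoiding {a,b} (resp. {a,c})
  have hclash : ∀ w, w ≠ a → w ∉ ({b, c} : Finset α) → s ≤ 2 * tt F {a, w} + 12 →
      ∀ D ∈ F, a ∉ D → b ∉ D → w ∈ D := by
    intro w hwa hwbc hwdemi D hDF haD hbD
    by_contra hwD
    have hwb : w ≠ b := by simp only [Finset.mem_insert, Finset.mem_singleton] at hwbc; tauto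
    have h2p := two_pairs F hu (pair_card (Ne.symm hba)) (pair_card (Ne.symm hwa))
      (pair_ne hba (Ne.symm hwb)) hDF (disj_pair_iff.2 ⟨haD, hbD⟩)
      (disj_pair_iff.2 ⟨haD, hwD⟩)
    have := hds D hDF
    omega
  have hclashc : ∀ w, w ≠ a → w ∉ ({b, c} : Finset α) → s ≤ 2 * tt F {a, w} + 12 →
      ∀ D ∈ F, a ∉ D → c ∉ D → w ∈ D := by
    intro w hwa hwbc hwdemi D hDF haD hcD
    by_contra hwD
    have hwc : w ≠ c := by simp only [Finset.mem_insert, Finset.mem_singleton] at hwbc; tauto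
    have h2p := two_pairs F hu (pair_card (Ne.symm hca)) (pair_card (Ne.symm hwa))
      (pair_ne hca (Ne.symm hwc)) hDF (disj_pair_iff.2 ⟨haD, hcD⟩)
      (disj_pair_iff.2 ⟨haD, hwD⟩)
    have := hds D hDF
    omega
  obtain ⟨w0, hw0D0, hw0a, hw0bc, hw0demi⟩ := hdemi D0 hD0
  have hw0b : w0 ≠ b := by simp only [Finset.mem_insert, Finset.mem_singleton] at hw0bc; tauto
  have hw0c : w0 ≠ c := by simp only [Finset.mem_insert, Finset.mem_singleton] at hw0bc; tauto
  by_cases htwodemi : ∃ w1, (w1 ≠ a ∧ w1 ∉ ({b, c} : Finset α) ∧ s ≤ 2 * tt F {a, w1} + 12)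
      ∧ w1 ≠ w0
  · -- two distinct demi vertices: Mc and Mb have at most one edge each
    obtain ⟨w1, ⟨hw1a, hw1bc, hw1demi⟩, hw10⟩ := htwodemi
    have hw1b : w1 ≠ b := by simp only [Finset.mem_insert, Finset.mem_singleton] at hw1bc; tauto
    have hw1c : w1 ≠ c := by simp only [Finset.mem_insert, Finset.mem_singleton] at hw1bc; tauto
    have hMc1 : Mc.card ≤ 1 := by
      apply Finset.card_le_one.2
      intro D hD D' hD'
      have key : ∀ G ∈ Mc, G = {c, w0, w1} := by
        intro G hG
        have hGF := hMcF hG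
        have hGmem := hG
        simp only [hMcdef, mem_filter] at hGmem
        have hsub : ({c, w0, w1} : Finset α) ⊆ G := by
          intro x hx
          simp only [Finset.mem_insert, Finset.mem_singleton] at hx
          rcases hx with h | h | h
          · rw [h]; exact hMc_c G hG
          · rw [h]; exact hclash w0 hw0a hw0bc hw0demi G hGF hGmem.2.1 hGmem.2.2
          · rw [h]; exact hclash w1 hw1a hw1bc hw1demi G hGF hGmem.2.1 hGmem.2.2
        have hcard3 : ({c, w0, w1} : Finset α).card = 3 := by
          rw [Finset.card_insert_of_notMem (by simp [Ne.symm hw0c, Ne.symm hw1c]),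
            Finset.card_insert_of_notMem (by simp [Ne.symm hw10]), Finset.card_singleton]
        exact (Finset.eq_of_subset_of_card_le hsub (by rw [hu G hGF, hcard3])).symm
      rw [key D hD, key D' hD']
    have hMb1 : Mb.card ≤ 1 := by
      apply Finset.card_le_one.2
      intro D hD D' hD'
      have key : ∀ G ∈ Mb, G = {b, w0, w1} := by
        intro G hG
        have hGF := hMbF hG
        have hGmem := hG
        simp only [hMbdef, mem_filter] at hGmem
        have hsub : ({b, w0, w1} : Finset α) ⊆ G := by
          intro x hx
          simp only [Finset.mem_insert, Finset.mem_singleton] at hx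
          rcases hx with h | h | h
          · rw [h]; exact hGmem.2.2.1
          · rw [h]; exact hclashc w0 hw0a hw0bc hw0demi G hGF hGmem.2.1 hGmem.2.2.2
          · rw [h]; exact hclashc w1 hw1a hw1bc hw1demi G hGF hGmem.2.1 hGmem.2.2.2
        have hcard3 : ({b, w0, w1} : Finset α).card = 3 := by
          rw [Finset.card_insert_of_notMem (by simp [Ne.symm hw0b, Ne.symm hw1b]),
            Finset.card_insert_of_notMem (by simp [Ne.symm hw10]), Finset.card_singleton]
        exact (Finset.eq_of_subset_of_card_le hsub (by rw [hu G hGF, hcard3])).symm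
      rw [key D hD, key D' hD']
    omega
  · -- unique demi vertex w0
    push_neg at htwodemi
    have hMc_w0 : ∀ D ∈ Mc, w0 ∈ D := by
      intro D hD
      obtain ⟨w, hwD, hwa, hwbc, hwdemi⟩ := hdemi D hD
      rwa [htwodemi w ⟨hwa, hwbc, hwdemi⟩] at hwD
    have hMb_w0 : ∀ D ∈ Mb, w0 ∈ D := by
      intro D hD
      obtain ⟨w, hwD, hwa, hwbc, hwdemi⟩ := hdemib D hD
      rwa [htwodemi w ⟨hwa, hwbc, hwdemi⟩] at hwD
    have htaw0le : tt F {a, w0} ≤ s + 3 := t_le F hu hd1 hds (pair_card (Ne.symm hw0a))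
    -- key: dg F a ≤ 3s + 36
    have hbr : ∀ (u : α) (M : Finset (Finset α)), u ≠ a → u ≠ w0 → tt F {a, u} ≤ s + 3 →
        M ⊆ F → (∀ D ∈ M, a ∉ D) → (∀ D ∈ M, u ∈ D) → (∀ D ∈ M, w0 ∈ D) →
        s ≤ 2 * M.card + 42 → dg F a ≤ 3 * s + 36 := by
      intro u M hua huw0 htau hMF hMa hMu hMw0
      intro hMbig
      have hqM : ∀ D ∈ M, ({u, w0} : Finset α) ⊆ D := by
        intro D hD x hx
        simp only [Finset.mem_insert, Finset.mem_singleton] at hx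
        rcases hx with rfl | rfl
        · exact hMu D hD
        · exact hMw0 D hD
      have hZcard := thirds_card2 F hu (pair_card huw0) hMF hqM
      have haZ : a ∉ M.biUnion fun D => D \ ({u, w0} : Finset α) := by
        intro h
        obtain ⟨D, hD, haD⟩ := Finset.mem_biUnion.1 h
        exact hMa D hD (Finset.mem_sdiff.1 haD).1
      have hlink := link_sum F hu haZ
      have hzex : ∃ z ∈ M.biUnion (fun D => D \ ({u, w0} : Finset α)), tt F {a, z} ≤ 30 := by
        by_contra hcon
        push_neg at hcon
        have h31 : ∀ z ∈ M.biUnion (fun D => D \ ({u, w0} : Finset α)), 31 ≤ tt F {a, z} :=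
          fun z hz => hcon z hz
        have hsl := Finset.sum_le_sum h31
        rw [Finset.sum_const, smul_eq_mul] at hsl
        omega
      obtain ⟨z, hzZ, hz30⟩ := hzex
      obtain ⟨Dstar, hDstar, hzD⟩ := Finset.mem_biUnion.1 hzZ
      have hDstarF := hMF hDstar
      have hDeq : Dstar = insert z {u, w0} :=
        third_singleton (hu Dstar hDstarF) (pair_card huw0) (hqM Dstar hDstar) hzD
      have hznq : z ∉ ({u, w0} : Finset α) := (Finset.mem_sdiff.1 hzD).2
      have hstep := step6 (s := s) F hu hds hDstarF (hMa Dstar hDstar)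
      have hsumD : ∑ w ∈ Dstar, tt F {a, w} = tt F {a, z} + (tt F {a, u} + tt F {a, w0}) := by
        rw [hDeq, Finset.sum_insert hznq]
        congr 1
        rw [Finset.sum_insert (by simp [huw0]), Finset.sum_singleton]
      omega
    have hsel : s ≤ 2 * Mc.card + 42 ∨ s ≤ 2 * Mb.card + 42 := by omega
    have hdg36 : dg F a ≤ 3 * s + 36 := by
      rcases hsel with h | h
      · exact hbr c Mc hca (Ne.symm hw0c) htacle hMcF
          (fun D hD => by simp only [hMcdef, mem_filter] at hD; exact hD.2.1)
          hMc_c hMc_w0 h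
      · exact hbr b Mb hba (Ne.symm hw0b) htable hMbF
          (fun D hD => by simp only [hMbdef, mem_filter] at hD; exact hD.2.1)
          (fun D hD => by simp only [hMbdef, mem_filter] at hD; exact hD.2.2.1)
          hMb_w0 h
    -- both Mc and Mb are large, so {c,w0} and {b,w0} are super pairs
    have hMclo : s ≤ Mc.card + 45 := by omega
    have hMblo : s ≤ Mb.card + 45 := by omega
    have hsup_cw0 : s + 11 ≤ 2 * tt F {c, w0} := by
      have hsub : Mc ⊆ F.filter (fun E => ({c, w0} : Finset α) ⊆ E) := by
        intro D hD
        simp only [mem_filter]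
        refine ⟨hMcF hD, ?_⟩
        intro x hx
        simp only [Finset.mem_insert, Finset.mem_singleton] at hx
        rcases hx with rfl | rfl
        · exact hMc_c D hD
        · exact hMc_w0 D hD
      have := Finset.card_le_card hsub
      have : Mc.card ≤ tt F {c, w0} := this
      omega
    have hsup_bw0 : s + 11 ≤ 2 * tt F {b, w0} := by
      have hsub : Mb ⊆ F.filter (fun E => ({b, w0} : Finset α) ⊆ E) := by
        intro D hD
        simp only [mem_filter]
        refine ⟨hMbF hD, ?_⟩
        intro x hx
        simp only [Finset.mem_insert, Finset.mem_singleton] at hx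
        rcases hx with rfl | rfl
        · simp only [hMbdef, mem_filter] at hD; exact hD.2.2.1
        · exact hMb_w0 D hD
      have : Mb.card ≤ tt F {b, w0} := Finset.card_le_card hsub
      omega
    -- find an edge through a avoiding b, c, w0
    have htaw0small : 3 * tt F {a, w0} + s < dg F a + 0 + 1 := by
      have := hnW w0 hw0a hw0bc
      omega
    have hA0w0 : (A0.filter fun E => w0 ∈ E).card ≤ tt F {a, w0} := by
      apply Finset.card_le_card
      intro E hE
      simp only [hA0def, mem_filter] at hE ⊢
      refine ⟨hE.1.1, ?_⟩
      intro x hx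
      simp only [Finset.mem_insert, Finset.mem_singleton] at hx
      rcases hx with rfl | rfl
      · exact hE.1.2.1
      · exact hE.2
    have hA0split := Finset.card_filter_add_card_filter_not
      (s := A0) (p := fun E => w0 ∈ E)
    have hE0ex : (A0.filter fun E => ¬ w0 ∈ E).Nonempty := by
      apply Finset.card_pos.1
      omega
    obtain ⟨E0, hE0⟩ := hE0ex
    simp only [hA0def, mem_filter] at hE0
    obtain ⟨⟨hE0F, haE0, hbE0, hcE0⟩, hw0E0⟩ := hE0
    have hpne : ({c, w0} : Finset α) ≠ ({b, w0} : Finset α) := by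
      intro h
      have : c ∈ ({b, w0} : Finset α) := by rw [← h]; simp
      simp only [Finset.mem_insert, Finset.mem_singleton] at this
      rcases this with h' | h'
      · exact hbc h'.symm
      · exact hw0c h'.symm
    exact dagger F hu hds (pair_card hw0c.symm ▸ pair_card (fun h => hw0c h.symm))
      (pair_card (fun h => hw0b h.symm)) hpne hsup_cw0 hsup_bw0 hE0F
      (disj_pair_iff.2 ⟨hcE0, hw0E0⟩) (disj_pair_iff.2 ⟨hbE0, hw0E0⟩)

lemma K4 (F : Finset (Finset α)) (hu : ∀ A ∈ F, A.card = 3)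
    (hd1 : ∀ A ∈ F, 1 ≤ dd F A) (hds : ∀ A ∈ F, dd F A ≤ s)
    (hc : F.card = 6 * s + 6) (hs : 625 < s) :
    ∃ A : Finset α, A.card = 4 ∧
      ∀ q : Finset α, q ⊆ A → q.card = 2 → s + 11 ≤ 2 * tt F q := by
  obtain ⟨a, hdga⟩ := big_vertex (s := s) F hu hd1 hds hc hs
  have hdgpos : 1 ≤ dg F a := by omega
  have hdggs : s < dg F a := by omega
  set W := (F.biUnion id).filter (fun w => w ≠ a ∧ dg F a ≤ s + 3 * tt F {a, w}) with hWdef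
  have hWprop : ∀ w ∈ W, w ≠ a ∧ dg F a ≤ s + 3 * tt F {a, w} := by
    intro w hw
    simp only [hWdef, mem_filter] at hw
    exact hw.2
  have hWsup : ∀ w ∈ W, s + 11 ≤ 2 * tt F {a, w} := by
    intro w hw
    have := (hWprop w hw).2
    omega
  have hnWgen : ∀ w, w ≠ a → w ∉ W → s + 3 * tt F {a, w} < dg F a := by
    intro w hwa hwW
    by_contra hcon
    push_neg at hcon
    have htpos : 1 ≤ tt F {a, w} := by omega
    have : (F.filter fun E => ({a, w} : Finset α) ⊆ E).Nonempty := by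
      apply Finset.card_pos.1
      have : tt F {a, w} = (F.filter fun E => ({a, w} : Finset α) ⊆ E).card := rfl
      omega
    obtain ⟨E, hE⟩ := this
    simp only [mem_filter] at hE
    apply hwW
    simp only [hWdef, mem_filter]
    refine ⟨Finset.mem_biUnion.2 ⟨E, hE.1, hE.2 (by simp)⟩, hwa, hcon⟩
  have hmeetW : ∀ D ∈ F, a ∉ D → ∃ w ∈ D, w ∈ W := by
    intro D hDF haD
    have hDne : D.Nonempty := Finset.card_pos.1 (by rw [hu D hDF]; omega)
    obtain ⟨w0, hw0D, hw0max⟩ := Finset.exists_max_image D (fun w => tt F {a, w}) hDne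
    have hsum : ∑ w ∈ D, tt F {a, w} ≤ 3 * tt F {a, w0} := by
      have := Finset.sum_le_sum (fun w hw => hw0max w hw)
      rw [Finset.sum_const, smul_eq_mul, hu D hDF] at this
      omega
    have hstep := step6 (s := s) F hu hds hDF haD
    refine ⟨w0, hw0D, ?_⟩
    simp only [hWdef, mem_filter]
    exact ⟨Finset.mem_biUnion.2 ⟨D, hDF, hw0D⟩, fun h => haD (h ▸ hw0D), by omega⟩
  have hW1 : ∀ D ∈ F, a ∉ D → (W \ D).card ≤ 1 := by
    intro D hDF haD
    by_contra hcon
    push_neg at hcon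
    obtain ⟨w, hw, w', hw', hww'⟩ := Finset.one_lt_card.1 hcon
    have hwW := (Finset.mem_sdiff.1 hw).1
    have hw'W := (Finset.mem_sdiff.1 hw').1
    have hwD := (Finset.mem_sdiff.1 hw).2
    have hw'D := (Finset.mem_sdiff.1 hw').2
    exact dagger F hu hds (pair_card (Ne.symm (hWprop w hwW).1))
      (pair_card (Ne.symm (hWprop w' hw'W).1))
      (pair_ne (hWprop w hwW).1 hww') (hWsup w hwW) (hWsup w' hw'W) hDF
      (disj_pair_iff.2 ⟨haD, hwD⟩) (disj_pair_iff.2 ⟨haD, hw'D⟩)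
  -- a witness edge avoiding a
  have hDex : ∃ D ∈ F, a ∉ D := by
    have : (F.filter fun E => a ∈ E).Nonempty := Finset.card_pos.1 (by unfold dg at hdgpos; omega)
    obtain ⟨E, hE⟩ := this
    simp only [mem_filter] at hE
    obtain ⟨D, hD⟩ := Finset.card_pos.1 (lt_of_lt_of_le Nat.zero_lt_one (hd1 E hE.1))
    simp only [mem_filter] at hD
    exact ⟨D, hD.1, fun h => (Finset.disjoint_left.1 hD.2) hE.2 h⟩
  obtain ⟨D₀, hD₀F, haD₀⟩ := hDex
  have hWle4 : W.card ≤ 4 := by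
    have h1 := Finset.card_inter_add_card_sdiff W D₀
    have h2 : (W ∩ D₀).card ≤ 3 := by
      refine le_trans (Finset.card_le_card Finset.inter_subset_right) ?_
      rw [hu D₀ hD₀F]
    have := hW1 D₀ hD₀F haD₀
    omega
  have hWge1 : 1 ≤ W.card := by
    obtain ⟨w, _, hwW⟩ := hmeetW D₀ hD₀F haD₀
    exact Finset.card_pos.2 ⟨w, hwW⟩
  -- case analysis on |W|
  have hWcases : W.card = 1 ∨ W.card = 2 ∨ W.card = 3 ∨ W.card = 4 := by omega
  rcases hWcases with h1 | h2 | h3 | h4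
  · -- |W| = 1 : impossible
    exfalso
    obtain ⟨b, hWb⟩ := Finset.card_eq_one.1 h1
    have hbW : b ∈ W := by rw [hWb]; simp
    have hbprop := hWprop b hbW
    have htpos : 1 ≤ tt F {a, b} := by
      have := hbprop.2; omega
    have : (F.filter fun E => ({a, b} : Finset α) ⊆ E).Nonempty := by
      apply Finset.card_pos.1
      have : tt F {a, b} = (F.filter fun E => ({a, b} : Finset α) ⊆ E).card := rfl
      omega
    obtain ⟨E, hE⟩ := this
    simp only [mem_filter] at hE
    obtain ⟨D, hD⟩ := Finset.card_pos.1 (lt_of_lt_of_le Nat.zero_lt_one (hd1 E hE.1))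
    simp only [mem_filter] at hD
    have hdl := Finset.disjoint_left.1 hD.2
    have haD : a ∉ D := fun h => hdl (hE.2 (by simp)) h
    obtain ⟨w, hwD, hwW⟩ := hmeetW D hD.1 haD
    have hwb : w = b := by
      rw [hWb] at hwW
      simpa using hwW
    exact hdl (hE.2 (by simp)) (hwb ▸ hwD)
  · -- |W| = 2 : impossible
    exfalso
    obtain ⟨b, c, hbc, hWbc⟩ := Finset.card_eq_two.1 h2
    have hbW : b ∈ W := by rw [hWbc]; simp
    have hcW : c ∈ W := by rw [hWbc]; simp
    refine caseW2 (s := s) F hu hd1 hds hc hs a b c (hWprop b hbW).1 (hWprop c hcW).1 hbc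
      (hWprop b hbW).2 (hWprop c hcW).2 hdga ?_ ?_
    · intro D hDF haD
      obtain ⟨w, hwD, hwW⟩ := hmeetW D hDF haD
      rw [hWbc] at hwW
      simp only [Finset.mem_insert, Finset.mem_singleton] at hwW
      rcases hwW with rfl | rfl
      · exact Or.inl hwD
      · exact Or.inr hwD
    · intro w hwa hwbc
      apply hnWgen w hwa
      rw [hWbc]
      exact hwbc
  · -- |W| = 3 : the main case
    obtain ⟨b, c, d, hbc, hbd, hcd, hWbcd⟩ := Finset.card_eq_three.1 h3
    have hbW : b ∈ W := by rw [hWbcd]; simp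
    have hcW : c ∈ W := by rw [hWbcd]; simp
    have hdW : d ∈ W := by rw [hWbcd]; simp
    have hba := (hWprop b hbW).1
    have hca := (hWprop c hcW).1
    have hda := (hWprop d hdW).1
    obtain ⟨hsbc, hsbd, hscd⟩ := caseW3 (s := s) F hu hd1 hds hc hs a b c d hba hca hda
      hbc hbd hcd (hWprop b hbW).2 (hWprop c hcW).2 (hWprop d hdW).2 hdga
      (by rw [← hWbcd]; exact hW1)
      (by intro w hwa hwbcd; apply hnWgen w hwa; rw [hWbcd]; exact hwbcd)
    have hPab : s + 11 ≤ 2 * tt F {a, b} := hWsup b hbW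
    have hPac : s + 11 ≤ 2 * tt F {a, c} := hWsup c hcW
    have hPad : s + 11 ≤ 2 * tt F {a, d} := hWsup d hdW
    have hPba : s + 11 ≤ 2 * tt F {b, a} := by rw [Finset.pair_comm b a]; exact hPab
    have hPca : s + 11 ≤ 2 * tt F {c, a} := by rw [Finset.pair_comm c a]; exact hPac
    have hPda : s + 11 ≤ 2 * tt F {d, a} := by rw [Finset.pair_comm d a]; exact hPad
    have hPcb : s + 11 ≤ 2 * tt F {c, b} := by rw [Finset.pair_comm c b]; exact hsbc
    have hPdb : s + 11 ≤ 2 * tt F {d, b} := by rw [Finset.pair_comm d b]; exact hsbd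
    have hPdc : s + 11 ≤ 2 * tt F {d, c} := by rw [Finset.pair_comm d c]; exact hscd
    refine ⟨insert a {b, c, d}, ?_, ?_⟩
    · rw [Finset.card_insert_of_notMem (by simp [Ne.symm hba, Ne.symm hca, Ne.symm hda]),
        Finset.card_insert_of_notMem (by simp [hbc, hbd]),
        Finset.card_insert_of_notMem (by simp [hcd]), Finset.card_singleton]
    · intro q hqA hq2
      obtain ⟨x, y, hxy, hqeq⟩ := Finset.card_eq_two.1 hq2
      subst hqeq
      have hx : x ∈ insert a ({b, c, d} : Finset α) := hqA (by simp)
      have hy : y ∈ insert a ({b, c, d} : Finset α) := hqA (by simp)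
      simp only [Finset.mem_insert, Finset.mem_singleton] at hx hy
      rcases hx with rfl | rfl | rfl | rfl <;> rcases hy with rfl | rfl | rfl | rfl <;>
        first
          | exact absurd rfl hxy
          | assumption
  · -- |W| = 4 : impossible
    exfalso
    have hsub4 : ∀ D ∈ F, a ∉ D → D ⊆ W := by
      intro D hDF haD
      have h1 := Finset.card_inter_add_card_sdiff W D
      have h2 := hW1 D hDF haD
      have h3 : (W ∩ D).card ≤ (D : Finset α).card := Finset.card_le_card Finset.inter_subset_right
      have h4 : D.card ≤ (W ∩ D).card := by rw [hu D hDF]; omega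
      have := Finset.eq_of_subset_of_card_le Finset.inter_subset_right h4
      rw [← this]
      exact Finset.inter_subset_left
    have hNAsub : (F.filter fun E => ¬ a ∈ E) ⊆ W.powersetCard 3 := by
      intro D hD
      simp only [mem_filter] at hD
      exact Finset.mem_powersetCard.2 ⟨hsub4 D hD.1 hD.2, hu D hD.1⟩
    have hNAcard : (F.filter fun E => ¬ a ∈ E).card ≤ 4 := by
      refine le_trans (Finset.card_le_card hNAsub) ?_
      rw [Finset.card_powersetCard, h4]
      decide
    have hsplit := Finset.card_filter_add_card_filter_not (s := F) (p := fun E => a ∈ E)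
    have hdglarge : 6 * s + 2 ≤ dg F a := by
      unfold dg
      omega
    have hcover : (F.filter fun E => a ∈ E) ⊆
        (F.filter fun E => ¬ a ∈ E).biUnion (fun D => F.filter (fun E => Disjoint D E)) := by
      intro E hE
      simp only [mem_filter] at hE
      obtain ⟨D, hD⟩ := Finset.card_pos.1 (lt_of_lt_of_le Nat.zero_lt_one (hd1 E hE.1))
      simp only [mem_filter] at hD
      apply Finset.mem_biUnion.2
      refine ⟨D, ?_, ?_⟩
      · simp only [mem_filter]
        exact ⟨hD.1, fun h => (Finset.disjoint_left.1 hD.2) hE.2 h⟩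
      · simp only [mem_filter]
        exact ⟨hE.1, hD.2.symm⟩
    have hsumle : ∑ D ∈ (F.filter fun E => ¬ a ∈ E), (F.filter (fun E => Disjoint D E)).card
        ≤ 4 * s := by
      have h1 : ∀ D ∈ (F.filter fun E => ¬ a ∈ E), (F.filter (fun E => Disjoint D E)).card ≤ s :=
        fun D hD => hds D (Finset.mem_filter.1 hD).1
      have h2 := Finset.sum_le_sum h1
      rw [Finset.sum_const, smul_eq_mul] at h2
      have h3 := Nat.mul_le_mul_right s hNAcard
      omega
    have := le_trans (Finset.card_le_card hcover) Finset.card_biUnion_le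
    unfold dg at hdglarge
    omega

lemma partner_card (F : Finset (Finset α)) (hu : ∀ A ∈ F, A.card = 3)
    {A : Finset α} (hA4 : A.card = 4)
    (hall2 : ∀ E ∈ F, (E ∩ A).card = 2) {E : Finset α} (hE : E ∈ F)
    {x : α} (hx : E \ A = {x}) :
    dd F E + (if insert x (A \ (E ∩ A)) ∈ F then 1 else 0) = tt F (A \ (E ∩ A)) := by
  set p := E ∩ A with hpdef
  set pb := A \ p with hpbdef
  have hpA : p ⊆ A := Finset.inter_subset_right
  have hp2 : p.card = 2 := hall2 E hE
  have hpb2 : pb.card = 2 := by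
    rw [hpbdef, Finset.card_sdiff_of_subset hpA, hA4, hp2]
  have hxE : x ∈ E := by
    have : x ∈ E \ A := by rw [hx]; simp
    exact (Finset.mem_sdiff.1 this).1
  have hxA : x ∉ A := by
    have : x ∈ E \ A := by rw [hx]; simp
    exact (Finset.mem_sdiff.1 this).2
  have hset : F.filter (fun D => Disjoint E D) =
      (F.filter (fun D => pb ⊆ D)).erase (insert x pb) := by
    ext D
    simp only [mem_filter, Finset.mem_erase]
    constructor
    · rintro ⟨hDF, hdisj⟩
      have hdl := Finset.disjoint_left.1 hdisj
      have hDA2 := hall2 D hDF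
      have hsubpb : D ∩ A ⊆ pb := by
        intro z hz
        simp only [Finset.mem_inter] at hz
        simp only [hpbdef, Finset.mem_sdiff]
        refine ⟨hz.2, ?_⟩
        intro hzp
        exact hdl ((Finset.mem_inter.1 hzp).1) hz.1
      have hpbeq : D ∩ A = pb := Finset.eq_of_subset_of_card_le hsubpb (by omega)
      refine ⟨?_, hDF, hpbeq ▸ Finset.inter_subset_left⟩
      intro hDeq
      exact hdl hxE (hDeq ▸ Finset.mem_insert_self x pb)
    · rintro ⟨hne, hDF, hpbD⟩
      refine ⟨hDF, ?_⟩
      have hDA2 := hall2 D hDF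
      have hpbDA : pb ⊆ D ∩ A := by
        intro z hz
        exact Finset.mem_inter.2 ⟨hpbD hz, (Finset.mem_sdiff.1 hz).1⟩
      have hDAeq : D ∩ A = pb := (Finset.eq_of_subset_of_card_le hpbDA (by omega)).symm
      have hDsd : (D \ A).card = 1 := by
        have := Finset.card_inter_add_card_sdiff D A
        rw [hu D hDF] at this
        omega
      obtain ⟨xD, hxD⟩ := Finset.card_eq_one.1 hDsd
      have hxDD : xD ∈ D \ A := by rw [hxD]; simp
      have hDeq : D = insert xD pb := by
        apply third_singleton (hu D hDF) hpb2 hpbD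
        rw [← hDAeq, Finset.sdiff_inter_self_left]
        exact hxD ▸ hxDD
      rw [Finset.disjoint_left]
      intro z hzE hzD
      by_cases hzA : z ∈ A
      · have hzp : z ∈ p := by rw [hpdef]; exact Finset.mem_inter.2 ⟨hzE, hzA⟩
        have : z ∈ pb := hDAeq ▸ Finset.mem_inter.2 ⟨hzD, hzA⟩
        exact (Finset.mem_sdiff.1 this).2 hzp
      · have hzx : z = x := by
          have : z ∈ E \ A := Finset.mem_sdiff.2 ⟨hzE, hzA⟩
          rw [hx] at this
          simpa using this
        have hzxD : z = xD := by
          have : z ∈ D \ A := Finset.mem_sdiff.2 ⟨hzD, hzA⟩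
          rw [hxD] at this
          simpa using this
        exact hne (by rw [hDeq, ← hzxD, hzx])
  unfold dd tt
  rw [hset]
  by_cases hmem : insert x pb ∈ F
  · have hmemf : insert x pb ∈ F.filter (fun D => pb ⊆ D) := by
      simp only [mem_filter]
      exact ⟨hmem, Finset.subset_insert x pb⟩
    rw [Finset.card_erase_of_mem hmemf, if_pos hmem]
    have : 1 ≤ (F.filter (fun D => pb ⊆ D)).card := Finset.card_pos.2 ⟨_, hmemf⟩
    omega
  · rw [Finset.erase_eq_of_notMem (fun hcon => hmem (Finset.mem_filter.1 hcon).1), if_neg hmem]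
    omega

lemma endgame (F : Finset (Finset α)) (hu : ∀ A ∈ F, A.card = 3)
    (hd1 : ∀ A ∈ F, 1 ≤ dd F A) (hds : ∀ A ∈ F, dd F A ≤ s)
    (hc : F.card = 6 * s + 6) (hs : 625 < s)
    {A : Finset α} (hA4 : A.card = 4)
    (hsup : ∀ q : Finset α, q ⊆ A → q.card = 2 → s + 11 ≤ 2 * tt F q) :
    ∃ (B : Finset α) (f : Finset α → Finset α),
      Disjoint A B ∧ s + 1 ≤ B.card ∧
      (∀ S ∈ A.powersetCard 2, f S ⊆ B ∧ (f S).card = s + 1 ∧ f S = f (A \ S)) ∧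
      F = (A.powersetCard 2).biUnion fun S => (f S).image fun x => insert x S := by
  -- every edge meets A in exactly two vertices
  have hall2 : ∀ E ∈ F, (E ∩ A).card = 2 := by
    intro E hE
    have hge : 2 ≤ (E ∩ A).card := by
      by_contra hlt
      push_neg at hlt
      have hic := Finset.card_inter_add_card_sdiff A E
      have hcomm : (A ∩ E).card = (E ∩ A).card := by rw [Finset.inter_comm]
      have hsd : 3 ≤ (A \ E).card := by omega
      obtain ⟨T, hTsub, hT3⟩ := Finset.exists_subset_card_eq hsd
      obtain ⟨x, y, z, hxy, hxz, hyz, hTeq⟩ := Finset.card_eq_three.1 hT3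
      have hxm : x ∈ A \ E := hTsub (by rw [hTeq]; simp)
      have hym : y ∈ A \ E := hTsub (by rw [hTeq]; simp)
      have hzm : z ∈ A \ E := hTsub (by rw [hTeq]; simp)
      have hsubA : ∀ w ∈ A \ E, w ∈ A := fun w hw => (Finset.mem_sdiff.1 hw).1
      have hnE : ∀ w ∈ A \ E, w ∉ E := fun w hw => (Finset.mem_sdiff.1 hw).2
      refine dagger F hu hds (pair_card hxy) (pair_card hxz)
        (pair_ne (Ne.symm hxy) hyz) ?_ ?_ hE
        (disj_pair_iff.2 ⟨hnE x hxm, hnE y hym⟩)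
        (disj_pair_iff.2 ⟨hnE x hxm, hnE z hzm⟩)
      · apply hsup
        · intro w hw
          simp only [Finset.mem_insert, Finset.mem_singleton] at hw
          rcases hw with h | h
          · rw [h]; exact hsubA x hxm
          · rw [h]; exact hsubA y hym
        · exact pair_card hxy
      · apply hsup
        · intro w hw
          simp only [Finset.mem_insert, Finset.mem_singleton] at hw
          rcases hw with h | h
          · rw [h]; exact hsubA x hxm
          · rw [h]; exact hsubA z hzm
        · exact pair_card hxz
    have hle : (E ∩ A).card ≤ 2 := by
      by_contra hgt
      push_neg at hgt
      have hsub : E ∩ A ⊆ E := Finset.inter_subset_left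
      have hEA : E ∩ A = E := Finset.eq_of_subset_of_card_le hsub (by rw [hu E hE]; omega)
      have hEsubA : E ⊆ A := by rw [← hEA]; exact Finset.inter_subset_right
      obtain ⟨D, hD⟩ := Finset.card_pos.1 (lt_of_lt_of_le Nat.zero_lt_one (hd1 E hE))
      simp only [mem_filter] at hD
      have hdl := Finset.disjoint_left.1 hD.2
      obtain ⟨x, y, z, hxy, hxz, hyz, hEeq⟩ := Finset.card_eq_three.1 (hu E hE)
      have hxm : x ∈ E := by rw [hEeq]; simp
      have hym : y ∈ E := by rw [hEeq]; simp
      have hzm : z ∈ E := by rw [hEeq]; simp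
      refine dagger F hu hds (pair_card hxy) (pair_card hxz)
        (pair_ne (Ne.symm hxy) hyz) ?_ ?_ hD.1
        (disj_pair_iff.2 ⟨fun h => hdl hxm h, fun h => hdl hym h⟩)
        (disj_pair_iff.2 ⟨fun h => hdl hxm h, fun h => hdl hzm h⟩)
      · apply hsup
        · intro w hw
          simp only [Finset.mem_insert, Finset.mem_singleton] at hw
          rcases hw with h | h
          · rw [h]; exact hEsubA hxm
          · rw [h]; exact hEsubA hym
        · exact pair_card hxy
      · apply hsup
        · intro w hw
          simp only [Finset.mem_insert, Finset.mem_singleton] at hw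
          rcases hw with h | h
          · rw [h]; exact hEsubA hxm
          · rw [h]; exact hEsubA hzm
        · exact pair_card hxz
    omega
  have hthird : ∀ E ∈ F, ∃ x, E \ A = {x} := by
    intro E hE
    apply Finset.card_eq_one.1
    have := Finset.card_inter_add_card_sdiff E A
    rw [hu E hE, hall2 E hE] at this
    omega
  have hinter_eq : ∀ E ∈ F, ∀ p : Finset α, p ⊆ A → p.card = 2 → p ⊆ E → E ∩ A = p := by
    intro E hE p hpA hp2 hpE
    have hsub : p ⊆ E ∩ A := fun z hz => Finset.mem_inter.2 ⟨hpE hz, hpA hz⟩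
    exact (Finset.eq_of_subset_of_card_le hsub (by rw [hall2 E hE, hp2])).symm
  -- bound t_p ≤ s+1 for pairs in A
  have hkey : ∀ p : Finset α, p ⊆ A → p.card = 2 →
      (F.filter fun E => p ⊆ E).Nonempty →
      1 ≤ tt F (A \ p) ∧ tt F (A \ p) ≤ s + 1 := by
    intro p hpA hp2 ⟨E, hE⟩
    simp only [mem_filter] at hE
    obtain ⟨hEF, hpE⟩ := hE
    obtain ⟨x, hx⟩ := hthird E hEF
    have hpc := partner_card F hu hA4 hall2 hEF hx
    rw [hinter_eq E hEF p hpA hp2 hpE] at hpc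
    have h1 := hd1 E hEF
    have h2 := hds E hEF
    constructor
    · by_cases hmem : insert x (A \ p) ∈ F
      · rw [if_pos hmem] at hpc; omega
      · rw [if_neg hmem] at hpc; omega
    · by_cases hmem : insert x (A \ p) ∈ F
      · rw [if_pos hmem] at hpc; omega
      · rw [if_neg hmem] at hpc; omega
  have hAsd : ∀ p : Finset α, p ⊆ A → A \ (A \ p) = p := by
    intro p hpA
    rw [Finset.sdiff_sdiff_self_left, Finset.inter_eq_right.2 hpA]
  have hsdA : ∀ p : Finset α, p ⊆ A → p.card = 2 → (A \ p) ⊆ A ∧ (A \ p).card = 2 := by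
    intro p hpA hp2
    exact ⟨Finset.sdiff_subset, by rw [Finset.card_sdiff_of_subset hpA, hA4, hp2]⟩
  have htle1 : ∀ p : Finset α, p ⊆ A → p.card = 2 → tt F p ≤ s + 1 := by
    intro p hpA hp2
    obtain ⟨hpbA, hpb2⟩ := hsdA p hpA hp2
    by_cases hne : (F.filter fun E => (A \ p) ⊆ E).Nonempty
    · have := (hkey (A \ p) hpbA hpb2 hne).2
      rwa [hAsd p hpA] at this
    · rw [Finset.not_nonempty_iff_eq_empty] at hne
      have h0 : tt F (A \ p) = 0 := by
        unfold tt; rw [hne]; simp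
      by_contra hcon
      push_neg at hcon
      have hpne : (F.filter fun E => p ⊆ E).Nonempty := by
        apply Finset.card_pos.1
        have : tt F p = (F.filter fun E => p ⊆ E).card := rfl
        omega
      have := (hkey p hpA hp2 hpne).1
      omega
  -- the fiber partition
  have hfiber : ∀ p ∈ A.powersetCard 2, (F.filter fun E => E ∩ A = p).card = tt F p := by
    intro p hp
    obtain ⟨hpA, hp2⟩ := Finset.mem_powersetCard.1 hp
    unfold tt
    congr 1
    ext E
    simp only [mem_filter]
    constructor
    · rintro ⟨hEF, hEA⟩
      exact ⟨hEF, hEA ▸ Finset.inter_subset_left⟩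
    · rintro ⟨hEF, hpE⟩
      exact ⟨hEF, hinter_eq E hEF p hpA hp2 hpE⟩
  have hsum : ∑ p ∈ A.powersetCard 2, tt F p = 6 * s + 6 := by
    have hfw := Finset.card_eq_sum_card_fiberwise
      (f := fun E => E ∩ A) (s := F) (t := A.powersetCard 2)
      (fun E hE => Finset.mem_powersetCard.2 ⟨Finset.inter_subset_right, hall2 E hE⟩)
    rw [hc] at hfw
    rw [Finset.sum_congr rfl hfiber] at hfw
    exact hfw.symm
  have hpc2card : (A.powersetCard 2).card = 6 := by
    rw [Finset.card_powersetCard, hA4]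
    decide
  have hall_eq : ∀ p ∈ A.powersetCard 2, tt F p = s + 1 := by
    by_contra hcon
    push_neg at hcon
    obtain ⟨p, hp, hpne⟩ := hcon
    obtain ⟨hpA, hp2⟩ := Finset.mem_powersetCard.1 hp
    have hlt : tt F p < s + 1 := lt_of_le_of_ne (htle1 p hpA hp2) hpne
    have hslt : ∑ q ∈ A.powersetCard 2, tt F q < ∑ _q ∈ A.powersetCard 2, (s + 1) := by
      apply Finset.sum_lt_sum
      · intro q hq
        obtain ⟨hqA, hq2⟩ := Finset.mem_powersetCard.1 hq
        exact htle1 q hqA hq2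
      · exact ⟨p, hp, hlt⟩
    rw [Finset.sum_const, hpc2card, smul_eq_mul] at hslt
    omega
  -- closing under complement
  have hins : ∀ E ∈ F, ∀ x : α, E \ A = {x} → insert x (A \ (E ∩ A)) ∈ F := by
    intro E hEF x hx
    have hpc := partner_card F hu hA4 hall2 hEF hx
    have hmemA : A \ (E ∩ A) ∈ A.powersetCard 2 := by
      apply Finset.mem_powersetCard.2
      refine ⟨Finset.sdiff_subset, ?_⟩
      rw [Finset.card_sdiff_of_subset Finset.inter_subset_right, hA4, hall2 E hEF]
    have heq := hall_eq _ hmemA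
    have h2 := hds E hEF
    by_contra hnot
    rw [if_neg hnot] at hpc
    omega
  -- the function f
  set f : Finset α → Finset α :=
    fun S => (F.filter fun E => S ⊆ E).biUnion fun E => E \ S with hfdef
  have hfmem : ∀ p : Finset α, p ⊆ A → p.card = 2 → ∀ x : α,
      (x ∈ f p ↔ (insert x p ∈ F ∧ x ∉ A)) := by
    intro p hpA hp2 x
    constructor
    · intro hx
      simp only [hfdef, Finset.mem_biUnion, mem_filter] at hx
      obtain ⟨E, ⟨hEF, hpE⟩, hxE⟩ := hx
      have hEA : E ∩ A = p := hinter_eq E hEF p hpA hp2 hpE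
      have hExA : E \ p = E \ A := by
        rw [← hEA, Finset.sdiff_inter_self_left]
      have hxEA : x ∈ E \ A := hExA ▸ hxE
      have hEeq : E = insert x p := third_singleton (hu E hEF) hp2 hpE hxE
      exact ⟨hEeq ▸ hEF, (Finset.mem_sdiff.1 hxEA).2⟩
    · rintro ⟨hmem, hxA⟩
      simp only [hfdef, Finset.mem_biUnion, mem_filter]
      refine ⟨insert x p, ⟨hmem, Finset.subset_insert x p⟩, ?_⟩
      exact Finset.mem_sdiff.2 ⟨Finset.mem_insert_self x p, fun hxp => hxA (hpA hxp)⟩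
  have hfcard : ∀ p : Finset α, p ⊆ A → p.card = 2 → (f p).card = s + 1 := by
    intro p hpA hp2
    have h1 := thirds_card F hu hp2 (q := p)
    have heq := hall_eq p (Finset.mem_powersetCard.2 ⟨hpA, hp2⟩)
    show ((F.filter fun E => p ⊆ E).biUnion fun E => E \ p).card = s + 1
    omega
  have hEinter : ∀ x : α, x ∉ A → ∀ p : Finset α, p ⊆ A → p.card = 2 →
      insert x p ∈ F → (insert x p ∩ A = p ∧ insert x p \ A = {x}) := by
    intro x hxA p hpA hp2 hmem
    constructor
    · exact hinter_eq _ hmem p hpA hp2 (Finset.subset_insert x p)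
    · ext z
      simp only [Finset.mem_sdiff, Finset.mem_insert, Finset.mem_singleton]
      constructor
      · rintro ⟨hz | hz, hzA⟩
        · exact hz
        · exact absurd (hpA hz) hzA
      · rintro rfl
        exact ⟨Or.inl rfl, hxA⟩
  have hfbar : ∀ p : Finset α, p ⊆ A → p.card = 2 → f p = f (A \ p) := by
    intro p hpA hp2
    obtain ⟨hpbA, hpb2⟩ := hsdA p hpA hp2
    ext x
    constructor
    · intro hx
      obtain ⟨hmem, hxA⟩ := (hfmem p hpA hp2 x).1 hx
      obtain ⟨hi, hsd⟩ := hEinter x hxA p hpA hp2 hmem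
      have := hins _ hmem x hsd
      rw [hi] at this
      exact (hfmem (A \ p) hpbA hpb2 x).2 ⟨this, hxA⟩
    · intro hx
      obtain ⟨hmem, hxA⟩ := (hfmem (A \ p) hpbA hpb2 x).1 hx
      obtain ⟨hi, hsd⟩ := hEinter x hxA (A \ p) hpbA hpb2 hmem
      have := hins _ hmem x hsd
      rw [hi, hAsd p hpA] at this
      exact (hfmem p hpA hp2 x).2 ⟨this, hxA⟩
  -- assembling B
  refine ⟨(A.powersetCard 2).biUnion f, f, ?_, ?_, ?_, ?_⟩
  · rw [Finset.disjoint_left]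
    intro x hxA hxB
    obtain ⟨p, hp, hxfp⟩ := Finset.mem_biUnion.1 hxB
    obtain ⟨hpA, hp2⟩ := Finset.mem_powersetCard.1 hp
    exact ((hfmem p hpA hp2 x).1 hxfp).2 hxA
  · have hne : (A.powersetCard 2).Nonempty := Finset.card_pos.1 (by omega)
    obtain ⟨p, hp⟩ := hne
    obtain ⟨hpA, hp2⟩ := Finset.mem_powersetCard.1 hp
    calc s + 1 = (f p).card := (hfcard p hpA hp2).symm
    _ ≤ _ := Finset.card_le_card (Finset.subset_biUnion_of_mem f hp)
  · intro S hS
    obtain ⟨hSA, hS2⟩ := Finset.mem_powersetCard.1 hS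
    exact ⟨Finset.subset_biUnion_of_mem f hS, hfcard S hSA hS2, hfbar S hSA hS2⟩
  · ext E
    constructor
    · intro hEF
      obtain ⟨x, hx⟩ := hthird E hEF
      have hpm : E ∩ A ∈ A.powersetCard 2 :=
        Finset.mem_powersetCard.2 ⟨Finset.inter_subset_right, hall2 E hEF⟩
      have hxA : x ∉ A := by
        have : x ∈ E \ A := by rw [hx]; simp
        exact (Finset.mem_sdiff.1 this).2
      have hEeq : E = insert x (E ∩ A) := by
        rw [Finset.insert_eq, ← hx]
        exact (Finset.sdiff_union_inter E A).symm
      apply Finset.mem_biUnion.2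
      refine ⟨E ∩ A, hpm, ?_⟩
      apply Finset.mem_image.2
      refine ⟨x, ?_, hEeq.symm⟩
      apply (hfmem (E ∩ A) Finset.inter_subset_right (hall2 E hEF) x).2
      exact ⟨hEeq ▸ hEF, hxA⟩
    · intro hE
      obtain ⟨S, hS, hEim⟩ := Finset.mem_biUnion.1 hE
      obtain ⟨hSA, hS2⟩ := Finset.mem_powersetCard.1 hS
      obtain ⟨x, hxf, hEeq⟩ := Finset.mem_image.1 hEim
      have := ((hfmem S hSA hS2 x).1 hxf).1
      rwa [hEeq] at this

end Stmt15

/-- For every `s > 625`, if a 3-uniform `[1,s]`-almost intersecting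
hypergraph has exactly `6s+6` edges, then it is of the form `M_f`. -/
theorem stmt_15 {α : Type*} [DecidableEq α] (s : ℕ) (hs : 625 < s)
    (F : Finset (Finset α))
    (huniform : ∀ A ∈ F, A.card = 3)
    (hai : ∀ A ∈ F, 1 ≤ (F.filter fun B => Disjoint A B).card ∧
      (F.filter fun B => Disjoint A B).card ≤ s)
    (hcard : F.card = 6 * s + 6) :
    ∃ (A B : Finset α) (f : Finset α → Finset α),
      Disjoint A B ∧ A.card = 4 ∧ s + 1 ≤ B.card ∧
      (∀ S ∈ A.powersetCard 2, f S ⊆ B ∧ (f S).card = s + 1 ∧ f S = f (A \ S)) ∧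
      F = (A.powersetCard 2).biUnion fun S => (f S).image fun x => insert x S := by
  have hd1 : ∀ A ∈ F, 1 ≤ Stmt15.dd F A := fun A hA => (hai A hA).1
  have hds : ∀ A ∈ F, Stmt15.dd F A ≤ s := fun A hA => (hai A hA).2
  obtain ⟨A, hA4, hsup⟩ := Stmt15.K4 (s := s) F huniform hd1 hds hcard hs
  obtain ⟨B, f, hAB, hBc, hcond, hFeq⟩ :=
    Stmt15.endgame (s := s) F huniform hd1 hds hcard hs hA4 hsup
  exact ⟨A, B, f, hAB, hA4, hBc, hcond, hFeq⟩
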